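/- arXiv:0907.5210 — 4 statements merged into one kernel-verified Lean document; each statement's English description precedes it below -/
import Mathlib

section
/- If B is a Young function and 0 < γ < 1, then ψ(t) = B(t^γ)^{1/γ} is also a Young function. -/
open MeasureTheory ENNReal Set
open scoped BigOperators NNReal

noncomputable section
namespace Frac

abbrev Rn (n : ℕ) := Fin n → ℝ

/-- A cube in ℝⁿ: closed ball of radius `r` (half side length) around `c` in the sup metric. -/
def cube {n : ℕ} (c : Rn n) (r : ℝ) : Set (Rn n) := Metric.closedBall c r

def vol {n : ℕ} (c : Rn n) (r : ℝ) : ℝ≥0∞ := volume (cube c r)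

/-- Average of an `ℝ≥0∞`-valued function over a cube. -/
def avg {n : ℕ} (c : Rn n) (r : ℝ) (h : Rn n → ℝ≥0∞) : ℝ≥0∞ :=
  (vol c r)⁻¹ * ∫⁻ y in cube c r, h y

/-- Multilinear fractional maximal operator `𝓜_α`. -/
def mfm {n m : ℕ} (α : ℝ) (f : Fin m → Rn n → ℝ≥0∞) (x : Rn n) : ℝ≥0∞ :=
  ⨆ (c : Rn n) (r : ℝ) (_ : 0 < r) (_ : x ∈ cube c r),
    (vol c r) ^ (α / (n : ℝ)) * ∏ i, avg c r (f i)

/-- Linear fractional maximal operator `M_β`. -/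
def lfm {n : ℕ} (β : ℝ) (h : Rn n → ℝ≥0∞) (x : Rn n) : ℝ≥0∞ :=
  ⨆ (c : Rn n) (r : ℝ) (_ : 0 < r) (_ : x ∈ cube c r),
    (vol c r) ^ (β / (n : ℝ)) * avg c r h

/-- Hardy–Littlewood maximal operator. -/
def HL {n : ℕ} (h : Rn n → ℝ≥0∞) : Rn n → ℝ≥0∞ := lfm 0 h

/-- Luxemburg `B`-average of `f` over a cube. -/
def luxAvg {n : ℕ} (B : ℝ → ℝ) (c : Rn n) (r : ℝ) (f : Rn n → ℝ) : ℝ :=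
  sInf {lam : ℝ | 0 < lam ∧ avg c r (fun y => ENNReal.ofReal (B (|f y| / lam))) ≤ 1}

/-- Orlicz maximal operator `M_B`. -/
def mOrlicz {n : ℕ} (B : ℝ → ℝ) (f : Rn n → ℝ) (x : Rn n) : ℝ≥0∞ :=
  ⨆ (c : Rn n) (r : ℝ) (_ : 0 < r) (_ : x ∈ cube c r), ENNReal.ofReal (luxAvg B c r f)

/-- Multilinear fractional Orlicz maximal operator `𝓜_{α,B}`. -/
def mfmOrlicz {n m : ℕ} (α : ℝ) (B : ℝ → ℝ) (f : Fin m → Rn n → ℝ) (x : Rn n) : ℝ≥0∞ :=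
  ⨆ (c : Rn n) (r : ℝ) (_ : 0 < r) (_ : x ∈ cube c r),
    (vol c r) ^ (α / (n : ℝ)) * ∏ i, ENNReal.ofReal (luxAvg B c r (f i))

/-- `L^p` norm of an `ℝ≥0∞`-valued function. -/
def lpN {n : ℕ} (p : ℝ) (h : Rn n → ℝ≥0∞) : ℝ≥0∞ := (∫⁻ y, h y ^ p) ^ (1 / p)

/-- Weak `L^q(u)` quasi-norm. -/
def wkN {n : ℕ} (q : ℝ) (h : Rn n → ℝ≥0∞) (u : Rn n → ℝ≥0∞) : ℝ≥0∞ :=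
  ⨆ (lam : ℝ≥0) (_ : 0 < lam),
    (lam : ℝ≥0∞) * (∫⁻ x in {x | (lam : ℝ≥0∞) < h x}, u x) ^ (1 / q)

/-- Young function: `B t = ∫₀ᵗ b`, `b` nontrivial nonnegative increasing. -/
def IsYoung (B : ℝ → ℝ) : Prop :=
  ∃ b : ℝ → ℝ, (∀ s, 0 ≤ b s) ∧ MonotoneOn b (Ici 0) ∧ (∃ s, 0 ≤ s ∧ b s ≠ 0) ∧
    ∀ t, 0 ≤ t → B t = ∫ s in (0:ℝ)..t, b s

/-- `Binv` is the inverse of `B` on `[0,∞)`. -/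
def IsYoungInv (B Binv : ℝ → ℝ) : Prop :=
  (∀ t, 0 ≤ t → B (Binv t) = t) ∧ (∀ t, 0 ≤ t → Binv (B t) = t)

/-- Multilinear fractional integral `𝓘_α`. -/
def Ia {n m : ℕ} (α : ℝ) (f : Fin m → Rn n → ℝ≥0∞) (x : Rn n) : ℝ≥0∞ :=
  ∫⁻ y : Fin m → Rn n, (∏ i, f i (y i)) *
    (ENNReal.ofReal (∑ i, dist x (y i))) ^ (α - (n : ℝ) * m)

/-- The Young function `t (1 + log⁺ t)^δ`. -/
def Bdelta (δ : ℝ) (t : ℝ) : ℝ := t * (1 + max (Real.log t) 0) ^ δ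

/-- Multilinear Muckenhoupt class `A_{P⃗}` (the `P i = 1` factor is the essential-inf one). -/
def multiA {n m : ℕ} (P : Fin m → ℝ) (v : Fin m → Rn n → ℝ) : Prop :=
  ∃ C : ℝ≥0∞, C ≠ ⊤ ∧ ∀ (c : Rn n) (r : ℝ), 0 < r →
    (avg c r (fun y => ∏ i, ENNReal.ofReal (v i y ^ ((∑ j, 1 / P j)⁻¹ / P i)))) ^ (∑ j, 1 / P j) *
    ∏ i, (if P i = 1 then
        (essInf (fun y => ENNReal.ofReal (v i y)) (volume.restrict (cube c r)))⁻¹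
      else (avg c r (fun y => ENNReal.ofReal (v i y ^ (1 - P i / (P i - 1))))) ^ ((P i - 1) / P i)) ≤ C

/-- Muckenhoupt–Wheeden `A_{p,q}` class. -/
def Apq {n : ℕ} (p q : ℝ) (w : Rn n → ℝ) : Prop :=
  ∃ C : ℝ≥0∞, C ≠ ⊤ ∧ ∀ (c : Rn n) (r : ℝ), 0 < r →
    (avg c r (fun y => ENNReal.ofReal (w y ^ q))) ^ (1/q) *
    (if p = 1 then (essInf (fun y => ENNReal.ofReal (w y)) (volume.restrict (cube c r)))⁻¹
     else (avg c r (fun y => ENNReal.ofReal (w y ^ (-(p/(p-1)))))) ^ ((p-1)/p)) ≤ C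

/-- Classical Muckenhoupt `A_s` class. -/
def Amuck {n : ℕ} (s : ℝ) (v : Rn n → ℝ) : Prop :=
  ∃ C : ℝ≥0∞, C ≠ ⊤ ∧ ∀ (c : Rn n) (r : ℝ), 0 < r →
    avg c r (fun y => ENNReal.ofReal (v y)) *
    (if s = 1 then (essInf (fun y => ENNReal.ofReal (v y)) (volume.restrict (cube c r)))⁻¹
     else (avg c r (fun y => ENNReal.ofReal (v y ^ (-(1/(s-1)))))) ^ (s-1)) ≤ C

/-- Moen's multilinear fractional class `A_{P⃗,q}`. -/
def ApqMulti {n m : ℕ} (P : Fin m → ℝ) (q : ℝ) (w : Fin m → Rn n → ℝ) : Prop :=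
  ∃ C : ℝ≥0∞, C ≠ ⊤ ∧ ∀ (c : Rn n) (r : ℝ), 0 < r →
    (avg c r (fun y => ENNReal.ofReal ((∏ i, w i y) ^ q))) ^ (1/q) *
    ∏ i, (if P i = 1 then
        (essInf (fun y => ENNReal.ofReal (w i y)) (volume.restrict (cube c r)))⁻¹
      else (avg c r (fun y => ENNReal.ofReal (w i y ^ (-(P i/(P i - 1)))))) ^ ((P i - 1)/(P i))) ≤ C

def DoublingFn (B : ℝ → ℝ) : Prop := ∃ c : ℝ, 0 < c ∧ ∀ t, 0 ≤ t → B (2*t) ≤ c * B t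

/-- The `B_r` condition: `∫_c^∞ B(t)/t^r dt/t < ∞`. -/
def BrCond (B : ℝ → ℝ) (r : ℝ) : Prop :=
  ∃ c : ℝ, 0 < c ∧ IntegrableOn (fun t => B t / t ^ (r+1)) (Ici c)

/-- A (minimal axiomatization of a) Banach function space norm over ℝⁿ. -/
structure BFS (n : ℕ) where
  N : (Rn n → ℝ) → ℝ≥0∞
  norm_zero : N 0 = 0
  mono : ∀ f g : Rn n → ℝ, (∀ x, |f x| ≤ |g x|) → N f ≤ N g

/-- Associate space norm of a BFS. -/
def BFS.assocN {n : ℕ} (Y : BFS n) (g : Rn n → ℝ) : ℝ≥0∞ :=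
  ⨆ (f : Rn n → ℝ) (_ : Y.N f ≤ 1), ∫⁻ x, ENNReal.ofReal |f x * g x|

/-- The `Y`-average over a cube: `‖δ_{l(Q)} (f χ_Q)‖_Y`, with `l(Q) = 2r`. -/
def BFS.locAvg {n : ℕ} (Y : BFS n) (c : Rn n) (r : ℝ) (f : Rn n → ℝ) : ℝ≥0∞ :=
  Y.N (fun x => Set.indicator (cube c r) f ((2*r) • x))

/-- Maximal operator associated to the associate space `Y'`. -/
def assocMax {n : ℕ} (Y : BFS n) (f : Rn n → ℝ) (x : Rn n) : ℝ≥0∞ :=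
  ⨆ (c : Rn n) (r : ℝ) (_ : 0 < r) (_ : x ∈ cube c r),
    Y.assocN (fun y => Set.indicator (cube c r) f ((2*r) • y))

/-- Essentially nondecreasing positive function with `φ(t)/t → 0`. -/
def EssND (φ : ℝ → ℝ) : Prop :=
  (∀ t, 0 < t → 0 < φ t) ∧ (∃ ρ : ℝ, 0 < ρ ∧ ∀ t s, 0 < t → t ≤ s → φ t ≤ ρ * φ s) ∧
    Filter.Tendsto (fun t => φ t / t) Filter.atTop (nhds 0)

/-- Generalized multilinear maximal operator `𝓜_φ`. -/
def mphi {n m : ℕ} (φ : ℝ → ℝ) (f : Fin m → Rn n → ℝ≥0∞) (x : Rn n) : ℝ≥0∞ :=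
  ⨆ (c : Rn n) (r : ℝ) (_ : 0 < r) (_ : x ∈ cube c r),
    ENNReal.ofReal (φ ((vol c r).toReal)) * ∏ i, avg c r (f i)


section YoungAux
open intervalIntegral

variable {b : ℝ → ℝ}

/-- primitive -/
def pr (b : ℝ → ℝ) (t : ℝ) : ℝ := ∫ s in (0:ℝ)..t, b s

/-- right limit of b -/
def bp (b : ℝ → ℝ) (u : ℝ) : ℝ := sInf (b '' Ioi u)

lemma bdd (hb0 : ∀ s, 0 ≤ b s) (u : ℝ) : BddBelow (b '' Ioi u) :=
  ⟨0, by rintro y ⟨s, -, rfl⟩; exact hb0 s⟩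

lemma bp_nonneg (hb0 : ∀ s, 0 ≤ b s) (u : ℝ) : 0 ≤ bp b u :=
  le_csInf ⟨b (u+1), mem_image_of_mem _ (by simp)⟩ (by rintro y ⟨s, -, rfl⟩; exact hb0 s)

lemma le_bp (hb : Monotone b) (u : ℝ) : b u ≤ bp b u :=
  le_csInf ⟨b (u+1), mem_image_of_mem _ (by simp)⟩ (by rintro y ⟨s, hs, rfl⟩; exact hb hs.le)

lemma bp_le (hb0 : ∀ s, 0 ≤ b s) {u s : ℝ} (h : u < s) : bp b u ≤ b s :=
  csInf_le (bdd hb0 u) (mem_image_of_mem _ h)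

lemma bp_mono (hb0 : ∀ s, 0 ≤ b s) : Monotone (bp b) := fun u v huv =>
  le_csInf ((Set.nonempty_Ioi).image _) (by rintro y ⟨s, hs, rfl⟩; exact bp_le hb0 (huv.trans_lt hs))

lemma pr_sub (hb : Monotone b) (u v : ℝ) : pr b v - pr b u = ∫ s in u..v, b s :=
  integral_interval_sub_left hb.intervalIntegrable hb.intervalIntegrable

lemma integral_le (hb : Monotone b) (hb0 : ∀ s, 0 ≤ b s) {u v : ℝ} (h : u ≤ v) :
    ∫ s in u..v, b s ≤ (v - u) * b v := by
  calc ∫ s in u..v, b s ≤ ∫ _ in u..v, b v := by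
        apply integral_mono_on h hb.intervalIntegrable intervalIntegrable_const
        exact fun x hx => hb hx.2
    _ = (v - u) * b v := by simp [smul_eq_mul]

lemma le_integral (hb : Monotone b) (hb0 : ∀ s, 0 ≤ b s) {u v : ℝ} (h : u < v) :
    (v - u) * bp b u ≤ ∫ s in u..v, b s := by
  rw [integral_of_le h.le]
  calc (v - u) * bp b u = ∫ _ in Ioc u v, bp b u := by
        simp [Real.volume_Ioc, ENNReal.toReal_ofReal (sub_nonneg.2 h.le), smul_eq_mul, h.le]
    _ ≤ ∫ s in Ioc u v, b s := by
        apply setIntegral_mono_on (integrableOn_const (by simp))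
          (hb.intervalIntegrable.1.mono_set subset_rfl)
          measurableSet_Ioc
        exact fun x hx => bp_le hb0 hx.1

/-- right derivative of the primitive -/
lemma pr_hasDerivWithinAt (hb : Monotone b) (hb0 : ∀ s, 0 ≤ b s) (u : ℝ) :
    HasDerivWithinAt (pr b) (bp b u) (Ioi u) u := by
  have hset : Ioi u \ {u} = Ioi u := Set.diff_singleton_eq_self (by simp)
  rw [hasDerivWithinAt_iff_tendsto_slope, hset]
  apply tendsto_of_tendsto_of_tendsto_of_le_of_le' tendsto_const_nhds
    (hb.tendsto_nhdsGT u)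
  · filter_upwards [self_mem_nhdsWithin] with v (hv : u < v)
    rw [slope_def_field, pr_sub hb, le_div_iff₀ (sub_pos.2 hv), mul_comm]
    exact le_integral hb hb0 hv
  · filter_upwards [self_mem_nhdsWithin] with v (hv : u < v)
    rw [slope_def_field, pr_sub hb, div_le_iff₀ (sub_pos.2 hv), mul_comm]
    exact integral_le hb hb0 hv.le

lemma pr_nonneg (hb0 : ∀ s, 0 ≤ b s) {u : ℝ} (hu : 0 ≤ u) : 0 ≤ pr b u :=
  intervalIntegral.integral_nonneg hu (fun s _ => hb0 s)

lemma pr_continuous (hb : Monotone b) : Continuous (pr b) :=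
  intervalIntegral.continuous_primitive (fun _ _ => hb.intervalIntegrable) 0

lemma ratio_mono (hb : Monotone b) (hb0 : ∀ s, 0 ≤ b s) {u v : ℝ} (hu : 0 < u) (huv : u ≤ v) :
    pr b u / u ≤ pr b v / v := by
  have hv : 0 < v := hu.trans_le huv
  have h1 : pr b u ≤ u * b u := by
    have := integral_le hb hb0 (u := 0) (v := u) hu.le
    simpa [pr] using this
  have hbu : pr b u / u ≤ b u := (div_le_iff₀ hu).2 (by linarith [h1])
  have h2 : (v - u) * (pr b u / u) ≤ pr b v - pr b u := by
    rw [pr_sub hb]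
    calc (v - u) * (pr b u / u) = ∫ _ in u..v, pr b u / u := by rw [intervalIntegral.integral_const, smul_eq_mul]
      _ ≤ ∫ s in u..v, b s := by
          apply integral_mono_on huv intervalIntegrable_const hb.intervalIntegrable
          exact fun s hs => hbu.trans (hb hs.1)
  rw [div_le_div_iff₀ hu hv]
  have hc : pr b u / u * u = pr b u := div_mul_cancel₀ _ hu.ne'
  nlinarith [h2, hc, hu, hv]


end YoungAux

/-- If `B` is a Young function and `0 < γ < 1`, then
`ψ(t) = B(t^γ)^{1/γ}` is also a Young function. -/
theorem stmt0 (B : ℝ → ℝ) (hB : IsYoung B) (γ : ℝ) (h0 : 0 < γ) (h1 : γ < 1) :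
    IsYoung (fun t => B (t ^ γ) ^ (1/γ)) := by
  obtain ⟨b0, hb00, hbmono, ⟨s₀, hs₀, hbs₀⟩, hBeq⟩ := hB
  set b : ℝ → ℝ := fun s => b0 (max s 0) with hbdef
  have hb : Monotone b := fun a c hac =>
    hbmono (Set.mem_Ici.2 (le_max_right _ _)) (Set.mem_Ici.2 (le_max_right _ _)) (max_le_max hac le_rfl)
  have hb0 : ∀ s, 0 ≤ b s := fun s => hb00 _
  have hBP : ∀ t, 0 ≤ t → B t = pr b t := by
    intro t ht
    rw [hBeq t ht, pr]
    apply intervalIntegral.integral_congr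
    intro s hs
    rw [uIcc_of_le ht] at hs
    simp [hbdef, max_eq_left hs.1]
  have hγ1 : 1 ≤ 1/γ := by rw [le_div_iff₀ h0]; linarith
  have he : (0:ℝ) ≤ 1/γ - 1 := by linarith
  set bd : ℝ → ℝ := fun x =>
    if x ≤ 0 then 0 else pr b (x^γ) ^ (1/γ-1) * bp b (x^γ) * x^(γ-1) with hbddef
  have hbdpos : ∀ x, 0 ≤ bd x := by
    intro x
    rw [hbddef]
    dsimp only
    split
    · exact le_rfl
    · rename_i hx
      have hx : 0 < x := not_le.1 hx
      have hu : (0:ℝ) ≤ x ^ γ := Real.rpow_nonneg hx.le γ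
      exact mul_nonneg (mul_nonneg (Real.rpow_nonneg (pr_nonneg hb0 hu) _)
        (bp_nonneg hb0 _)) (Real.rpow_nonneg hx.le _)
  have hkey : ∀ x : ℝ, 0 < x → bd x = (pr b (x^γ) / x^γ) ^ (1/γ - 1) * bp b (x^γ) := by
    intro x hx
    have hu : 0 < x ^ γ := Real.rpow_pos_of_pos hx γ
    have hxp : x ^ (γ - 1) = (x ^ γ) ^ (-(1/γ - 1)) := by
      rw [← Real.rpow_mul hx.le]
      congr 1
      field_simp
      ring
    rw [hbddef]
    dsimp only
    rw [if_neg (not_le.2 hx), Real.div_rpow (pr_nonneg hb0 hu.le) hu.le, hxp,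
      Real.rpow_neg hu.le, div_eq_mul_inv]
    ring
  have hbdmono : MonotoneOn bd (Ici 0) := by
    intro x hx y hy hxy
    rcases eq_or_lt_of_le (Set.mem_Ici.1 hx : (0:ℝ) ≤ x) with h|h
    · have : bd x = 0 := by rw [hbddef]; dsimp only; rw [if_pos (le_of_eq h.symm)]
      rw [this]; exact hbdpos y
    · have hy' : 0 < y := h.trans_le hxy
      rw [hkey x h, hkey y hy']
      have hu : 0 < x^γ := Real.rpow_pos_of_pos h γ
      have hv : 0 < y^γ := Real.rpow_pos_of_pos hy' γ
      have huv : x^γ ≤ y^γ := Real.rpow_le_rpow h.le hxy h0.le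
      apply mul_le_mul
      · exact Real.rpow_le_rpow (div_nonneg (pr_nonneg hb0 hu.le) hu.le)
          (ratio_mono hb hb0 hu huv) he
      · exact bp_mono hb0 huv
      · exact bp_nonneg hb0 _
      · exact Real.rpow_nonneg (div_nonneg (pr_nonneg hb0 hv.le) hv.le) _
  refine ⟨bd, hbdpos, hbdmono, ?_, ?_⟩
  · -- nontriviality
    set u : ℝ := s₀ + 1 with hudef
    have hu0 : 0 < u := by linarith
    refine ⟨u ^ (1/γ), Real.rpow_nonneg hu0.le _, ?_⟩
    have hx : 0 < u ^ (1/γ) := Real.rpow_pos_of_pos hu0 _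
    have hxg : (u ^ (1/γ)) ^ γ = u := by
      rw [← Real.rpow_mul hu0.le, one_div_mul_cancel h0.ne', Real.rpow_one]
    have hbs : 0 < b s₀ := by
      have : b s₀ = b0 s₀ := by simp [hbdef, max_eq_left hs₀]
      rw [this]
      exact lt_of_le_of_ne (hb00 s₀) (Ne.symm hbs₀)
    have hpru : 0 < pr b u := by
      have h2 : (u - s₀) * bp b s₀ ≤ ∫ s in s₀..u, b s := le_integral hb hb0 (by linarith)
      have h3 : pr b u - pr b s₀ = ∫ s in s₀..u, b s := pr_sub hb s₀ u
      have h4 : b s₀ ≤ bp b s₀ := le_bp hb s₀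
      have h5 : 0 ≤ pr b s₀ := pr_nonneg hb0 hs₀
      nlinarith
    have hbpu : 0 < bp b u := lt_of_lt_of_le (lt_of_lt_of_le hbs (hb (by linarith))) (le_bp hb u)
    have : bd (u ^ (1/γ)) = pr b u ^ (1/γ-1) * bp b u * (u ^ (1/γ)) ^ (γ-1) := by
      rw [hbddef]; dsimp only; rw [if_neg (not_le.2 hx), hxg]
    rw [this]
    positivity
  · -- the integral identity
    intro t ht
    show B (t ^ γ) ^ (1/γ) = _
    rcases eq_or_lt_of_le ht with h|h
    · rw [← h]
      simp only [Real.zero_rpow h0.ne', intervalIntegral.integral_same]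
      rw [hBP 0 le_rfl]
      simp [pr, Real.zero_rpow (by positivity : (1/γ : ℝ) ≠ 0)]
      exact Real.zero_rpow (inv_ne_zero h0.ne')
    · have hcont : ContinuousOn (fun x : ℝ => pr b (x^γ) ^ (1/γ)) (Icc 0 t) := by
        apply ContinuousOn.rpow_const
        · exact (pr_continuous hb).comp_continuousOn
            (fun x _ => (Real.continuousAt_rpow_const x γ (Or.inr h0.le)).continuousWithinAt)
        · intro x hx
          right; positivity
      have hderiv : ∀ x ∈ Ioo 0 t,
          HasDerivWithinAt (fun x : ℝ => pr b (x^γ) ^ (1/γ)) (bd x) (Ioi x) x := by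
        intro x hx
        have hx0 : 0 < x := hx.1
        have hu : 0 < x^γ := Real.rpow_pos_of_pos hx0 γ
        have hA : HasDerivAt (fun y : ℝ => y ^ γ) (γ * x ^ (γ-1)) x :=
          Real.hasDerivAt_rpow_const (Or.inl hx0.ne')
        have hBd := pr_hasDerivWithinAt hb hb0 (x^γ)
        have hmaps : MapsTo (fun y : ℝ => y ^ γ) (Ioi x) (Ioi (x^γ)) :=
          fun y hy => Real.rpow_lt_rpow hx0.le hy h0
        have hcomp := hBd.comp x hA.hasDerivWithinAt hmaps
        have houter : HasDerivAt (fun z : ℝ => z ^ (1/γ))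
            ((1/γ) * pr b (x^γ) ^ (1/γ - 1)) (pr b (x^γ)) :=
          Real.hasDerivAt_rpow_const (Or.inr hγ1)
        have hfull := houter.comp_hasDerivWithinAt x hcomp
        have hval : bd x = (1/γ) * pr b (x^γ) ^ (1/γ - 1) * (bp b (x^γ) * (γ * x ^ (γ-1))) := by
          rw [hbddef]; dsimp only; rw [if_neg (not_le.2 hx0)]
          field_simp
        rw [hval]
        exact hfull
      have hint : IntervalIntegrable bd volume 0 t := by
        apply MonotoneOn.intervalIntegrable
        rw [uIcc_of_le h.le]
        exact hbdmono.mono (Icc_subset_Ici_self)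
      have key := intervalIntegral.integral_eq_sub_of_hasDeriv_right_of_le h.le hcont hderiv hint
      rw [hBP _ (Real.rpow_nonneg ht γ)]
      rw [key]
      simp [pr, Real.zero_rpow h0.ne', Real.zero_rpow (by positivity : (1/γ : ℝ) ≠ 0)]
      rw [Real.zero_rpow (inv_ne_zero h0.ne'), sub_zero]

end Frac
end
end

section
/- (Welland-type inequality) Let 0 < α < nm and 0 < ε < min{α, nm - α}. If f₁,…,f_m are bounded functions with compact support, then |I_α f⃗(x)| ≤ C (M_{α+ε} f⃗(x) · M_{α-ε} f⃗(x))^{1/2} for all x, where C depends only on n, m, α, ε. -/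
open MeasureTheory ENNReal Set
open scoped BigOperators NNReal

noncomputable section
namespace Frac

/-! ### Auxiliary lemmas for `stmt14` -/

lemma lintegral_mul_prod_le' {X Y : Type*} [MeasurableSpace X] [MeasurableSpace Y]
    (μ : Measure X) (ν : Measure Y) [SFinite ν]
    (u : X → ℝ≥0∞) (v : Y → ℝ≥0∞) (hu : ∀ x, u x ≠ ∞) (hv : ∫⁻ y, v y ∂ν ≠ ∞) :
    ∫⁻ z, u z.1 * v z.2 ∂(μ.prod ν) ≤ (∫⁻ x, u x ∂μ) * ∫⁻ y, v y ∂ν := by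
  conv_lhs => rw [lintegral_def]
  refine iSup₂_le fun φ hφ => ?_
  rw [← SimpleFunc.lintegral_eq_lintegral,
    lintegral_prod _ φ.measurable.aemeasurable]
  calc ∫⁻ x, ∫⁻ y, φ (x, y) ∂ν ∂μ
      ≤ ∫⁻ x, ∫⁻ y, u x * v y ∂ν ∂μ := by
        refine lintegral_mono fun x => lintegral_mono fun y => hφ (x, y)
    _ = ∫⁻ x, u x * ∫⁻ y, v y ∂ν ∂μ := by
        refine lintegral_congr fun x => lintegral_const_mul' _ _ (hu x)
    _ = (∫⁻ x, u x ∂μ) * ∫⁻ y, v y ∂ν := lintegral_mul_const' _ _ hv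

lemma lintegral_pi_prod_le' {X : Type*} [MeasurableSpace X] : ∀ {m : ℕ}
    (μ : Fin m → Measure X), (∀ i, SigmaFinite (μ i)) → ∀ (h : Fin m → X → ℝ≥0∞),
    (∀ i x, h i x ≠ ∞) → (∀ i, ∫⁻ x, h i x ∂(μ i) ≠ ∞) →
    ∫⁻ y, ∏ i, h i (y i) ∂(Measure.pi μ) ≤ ∏ i, ∫⁻ x, h i x ∂(μ i) := by
  intro m
  induction m with
  | zero =>
      intro μ _ h _ _
      simp only [Finset.univ_eq_empty, Finset.prod_empty, lintegral_one]
      rw [Measure.pi_univ]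
      simp
  | succ m ih =>
      intro μ hσ h hfin hint
      haveI := hσ
      have mp := measurePreserving_piFinSuccAbove μ 0
      set G : X × (Fin m → X) → ℝ≥0∞ := fun p => h 0 p.1 * ∏ j, h j.succ (p.2 j) with hG
      have key : ∀ y : Fin (m+1) → X,
          (∏ i, h i (y i)) = G (MeasurableEquiv.piFinSuccAbove (fun _ => X) 0 y) := by
        intro y
        rw [Fin.prod_univ_succ]
        simp [G, MeasurableEquiv.piFinSuccAbove, Fin.removeNth, Fin.succAbove, Fin.tail]
      calc ∫⁻ y, ∏ i, h i (y i) ∂(Measure.pi μ)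
          = ∫⁻ y, G (MeasurableEquiv.piFinSuccAbove (fun _ => X) 0 y) ∂(Measure.pi μ) := by
            exact lintegral_congr key
        _ = ∫⁻ p, G p ∂((μ 0).prod (Measure.pi fun j => μ ((0 : Fin (m+1)).succAbove j))) :=
            mp.lintegral_comp_emb (MeasurableEquiv.measurableEmbedding _) G
        _ ≤ (∫⁻ x, h 0 x ∂(μ 0)) * ∏ j : Fin m, ∫⁻ x, h (Fin.succ j) x ∂(μ (Fin.succ j)) := by
            simp only [Fin.succAbove_zero]
            have hv := ih (fun j => μ (Fin.succ j)) (fun j => inferInstance)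
              (fun j => h (Fin.succ j)) (fun j x => hfin _ x) (fun j => hint _)
            have hvne : ∫⁻ w, ∏ j : Fin m, h (Fin.succ j) (w j)
                ∂(Measure.pi fun j => μ (Fin.succ j)) ≠ ⊤ :=
              ne_top_of_le_ne_top (ENNReal.prod_ne_top fun i _ => hint _) hv
            refine le_trans (lintegral_mul_prod_le' (μ 0) (Measure.pi fun j => μ (Fin.succ j))
              (h 0) (fun w => ∏ j : Fin m, h (Fin.succ j) (w j)) (fun x => hfin 0 x) hvne) ?_
            exact mul_le_mul_right hv _
        _ = ∏ i, ∫⁻ x, h i x ∂(μ i) := by rw [Fin.prod_univ_succ]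

lemma two_rpow_lt_one' {ε : ℝ} (hε : 0 < ε) : (2:ℝ) ^ (-ε) < 1 :=
  Real.rpow_lt_one_of_one_lt_of_neg one_lt_two (neg_neg_iff_pos.mpr hε)

lemma geom_inv_eq' {q : ℝ} (hq0 : 0 ≤ q) (hq1 : q < 1) :
    (1 - ENNReal.ofReal q)⁻¹ = ENNReal.ofReal ((1 - q)⁻¹) := by
  rw [show (1:ℝ≥0∞) - ENNReal.ofReal q = ENNReal.ofReal (1 - q) by
      rw [← ENNReal.ofReal_one, ← ENNReal.ofReal_sub _ hq0],
    ← ENNReal.ofReal_inv_of_pos (by linarith)]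

lemma pow_term_eq' (ε : ℝ) (j : ℕ) :
    (2:ℝ) ^ ((j:ℝ) * -ε) = ((2:ℝ) ^ (-ε)) ^ j := by
  rw [mul_comm, Real.rpow_mul (by norm_num : (0:ℝ) ≤ 2), Real.rpow_natCast]

lemma tailA (ε : ℝ) (hε : 0 < ε) (K : ℤ) :
    ∑' k : ℤ, (if K ≤ k then ENNReal.ofReal ((2:ℝ) ^ (-((k:ℝ) * ε))) else 0)
      ≤ ENNReal.ofReal ((2:ℝ) ^ (-((K:ℝ) * ε)) * (1 - (2:ℝ) ^ (-ε))⁻¹) := by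
  set q : ℝ := (2:ℝ) ^ (-ε) with hq
  have hq0 : 0 ≤ q := (Real.rpow_pos_of_pos two_pos _).le
  have hq1 : q < 1 := two_rpow_lt_one' hε
  set g : ℤ → ℝ≥0∞ := fun k => if K ≤ k then ENNReal.ofReal ((2:ℝ) ^ (-((k:ℝ) * ε))) else 0 with hg
  have hinj : Function.Injective (fun j : ℕ => K + (j : ℤ)) := by
    intro a b hab; simpa using hab
  have hsupp : Function.support g ⊆ Set.range (fun j : ℕ => K + (j : ℤ)) := by
    intro k hk
    have hKk : K ≤ k := by
      by_contra hc
      simp [hg, hc] at hk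
    exact ⟨(k - K).toNat, by simp [Int.toNat_of_nonneg (sub_nonneg.mpr hKk)]⟩
  rw [← hinj.tsum_eq hsupp]
  have hcomp : ∀ j : ℕ, g (K + (j:ℤ)) =
      ENNReal.ofReal ((2:ℝ) ^ (-((K:ℝ) * ε))) * (ENNReal.ofReal q) ^ j := by
    intro j
    have h1 : g (K + (j:ℤ)) = ENNReal.ofReal ((2:ℝ) ^ (-((((K:ℝ) + (j:ℕ))) * ε))) := by
      simp [hg, le_add_of_nonneg_right (Int.ofNat_nonneg j)]
    have h2 : -(((K:ℝ) + (j:ℕ)) * ε) = (-((K:ℝ)*ε)) + (j:ℝ) * (-ε) := by ring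
    rw [h1, h2, Real.rpow_add two_pos, pow_term_eq',
      ENNReal.ofReal_mul (Real.rpow_pos_of_pos two_pos _).le, ENNReal.ofReal_pow hq0]
  calc (∑' j : ℕ, g (K + (j:ℤ)))
      = ENNReal.ofReal ((2:ℝ) ^ (-((K:ℝ) * ε))) * ∑' j : ℕ, (ENNReal.ofReal q) ^ j := by
        rw [← ENNReal.tsum_mul_left]; exact tsum_congr hcomp
    _ = ENNReal.ofReal ((2:ℝ) ^ (-((K:ℝ) * ε)) * (1 - q)⁻¹) := by
        rw [ENNReal.tsum_geometric, geom_inv_eq' hq0 hq1,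
          ← ENNReal.ofReal_mul (Real.rpow_pos_of_pos two_pos _).le]
    _ ≤ ENNReal.ofReal ((2:ℝ) ^ (-((K:ℝ) * ε)) * (1 - q)⁻¹) := le_rfl

lemma tailB (ε : ℝ) (hε : 0 < ε) (K : ℤ) :
    ∑' k : ℤ, (if k < K then ENNReal.ofReal ((2:ℝ) ^ ((k:ℝ) * ε)) else 0)
      ≤ ENNReal.ofReal ((2:ℝ) ^ ((K:ℝ) * ε) * (1 - (2:ℝ) ^ (-ε))⁻¹) := by
  set q : ℝ := (2:ℝ) ^ (-ε) with hq
  have hq0 : 0 ≤ q := (Real.rpow_pos_of_pos two_pos _).le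
  have hq1 : q < 1 := two_rpow_lt_one' hε
  set g : ℤ → ℝ≥0∞ := fun k => if k < K then ENNReal.ofReal ((2:ℝ) ^ ((k:ℝ) * ε)) else 0 with hg
  have hinj : Function.Injective (fun j : ℕ => K - 1 - (j : ℤ)) := by
    intro a b hab; simpa using hab
  have hsupp : Function.support g ⊆ Set.range (fun j : ℕ => K - 1 - (j : ℤ)) := by
    intro k hk
    have hKk : k < K := by
      by_contra hc
      simp [hg, hc] at hk
    refine ⟨(K - 1 - k).toNat, ?_⟩
    simp [Int.toNat_of_nonneg (by omega : (0:ℤ) ≤ K - 1 - k)]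
  rw [← hinj.tsum_eq hsupp]
  have hcomp : ∀ j : ℕ, g (K - 1 - (j:ℤ)) =
      ENNReal.ofReal ((2:ℝ) ^ (((K:ℝ) - 1) * ε)) * (ENNReal.ofReal q) ^ j := by
    intro j
    have h1 : g (K - 1 - (j:ℤ)) = ENNReal.ofReal ((2:ℝ) ^ ((((K:ℝ) - 1 - (j:ℕ))) * ε)) := by
      have hc : ((K - 1 - (j:ℤ) : ℤ) : ℝ) = (K:ℝ) - 1 - (j:ℕ) := by push_cast; ring
      simp [hg, hc, (by omega : K - 1 - (j:ℤ) < K)]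
    have h2 : ((K:ℝ) - 1 - (j:ℕ)) * ε = (((K:ℝ) - 1) * ε) + (j:ℝ) * (-ε) := by ring
    rw [h1, h2, Real.rpow_add two_pos, pow_term_eq',
      ENNReal.ofReal_mul (Real.rpow_pos_of_pos two_pos _).le, ENNReal.ofReal_pow hq0]
  calc (∑' j : ℕ, g (K - 1 - (j:ℤ)))
      = ENNReal.ofReal ((2:ℝ) ^ (((K:ℝ) - 1) * ε)) * ∑' j : ℕ, (ENNReal.ofReal q) ^ j := by
        rw [← ENNReal.tsum_mul_left]; exact tsum_congr hcomp
    _ = ENNReal.ofReal ((2:ℝ) ^ (((K:ℝ) - 1) * ε) * (1 - q)⁻¹) := by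
        rw [ENNReal.tsum_geometric, geom_inv_eq' hq0 hq1,
          ← ENNReal.ofReal_mul (Real.rpow_pos_of_pos two_pos _).le]
    _ ≤ ENNReal.ofReal ((2:ℝ) ^ ((K:ℝ) * ε) * (1 - q)⁻¹) := by
        refine ENNReal.ofReal_le_ofReal (mul_le_mul_of_nonneg_right ?_
          (inv_nonneg.mpr (by linarith)))
        exact Real.rpow_le_rpow_of_exponent_le one_le_two (by nlinarith)

lemma vol_eq {n : ℕ} (x : Rn n) {R : ℝ} (hR : 0 ≤ R) :
    vol x R = ENNReal.ofReal ((2*R) ^ n) := by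
  rw [vol, cube, Real.volume_pi_closedBall x hR, Fintype.card_fin]

lemma le_mfm {n m : ℕ} (β : ℝ) (f : Fin m → Rn n → ℝ≥0∞) (x c : Rn n) (r : ℝ)
    (hr : 0 < r) (hx : x ∈ cube c r) :
    (vol c r) ^ (β / (n:ℝ)) * ∏ i, avg c r (f i) ≤ mfm β f x :=
  le_iSup_of_le c (le_iSup_of_le r (le_iSup_of_le hr (le_iSup_of_le hx le_rfl)))

lemma key_est {n m : ℕ} (hn : 0 < n) (hm : 0 < m) (α β : ℝ) (hβ : 0 < β)
    (hβnm : β < (n:ℝ)*m) (hαnm : α ≤ (n:ℝ)*m)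
    (f : Fin m → Rn n → ℝ) (hfb : ∀ i, ∃ M : ℝ, ∀ y, |f i y| ≤ M) (x : Rn n) (k : ℤ) :
    (∫⁻ y : Fin m → Rn n in
        {y | (2:ℝ)^(k:ℤ) ≤ ∑ i, dist x (y i) ∧ ∑ i, dist x (y i) < (2:ℝ)^(k+1:ℤ)},
        (∏ i, ENNReal.ofReal |f i (y i)|) *
          (ENNReal.ofReal (∑ i, dist x (y i))) ^ (α - (n:ℝ)*m))
      ≤ ENNReal.ofReal ((4:ℝ) ^ ((n:ℝ)*m - β) * (2:ℝ) ^ ((k:ℝ) * (α - β))) *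
          mfm β (fun i y => ENNReal.ofReal |f i y|) x := by
  have hn' : (0:ℝ) < n := Nat.cast_pos.mpr hn
  set g : Fin m → Rn n → ℝ≥0∞ := fun i y => ENNReal.ofReal |f i y| with hgdef
  set s : (Fin m → Rn n) → ℝ := fun y => ∑ i, dist x (y i) with hsdef
  have hs : Continuous s := by
    apply continuous_finset_sum
    intro i _
    exact continuous_const.dist ((continuous_apply i))
  set t : ℝ := (2:ℝ)^(k:ℤ) with htdef
  have ht : 0 < t := zpow_pos two_pos k
  set R : ℝ := (2:ℝ)^(k+1:ℤ) with hRdef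
  have hR : 0 < R := zpow_pos two_pos _
  have hR2 : R = 2*t := by rw [hRdef, htdef, zpow_add_one₀ (two_ne_zero), mul_comm]
  set E : Set (Fin m → Rn n) := {y | t ≤ s y ∧ s y < R} with hEdef
  have hE : MeasurableSet E := by
    have : E = s ⁻¹' (Ico t R) := rfl
    rw [this]
    exact hs.measurable measurableSet_Ico
  set Q : Set (Rn n) := cube x R with hQdef
  have hQm : MeasurableSet Q := measurableSet_closedBall
  have hvol : vol x R = ENNReal.ofReal ((4*t) ^ n) := by
    rw [vol_eq x hR.le, hR2]; congr 1; ring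
  have hvol0 : vol x R ≠ 0 := by
    rw [hvol]; simp [ENNReal.ofReal_eq_zero, not_le]; positivity
  have hvolt : vol x R ≠ ⊤ := by rw [hvol]; exact ofReal_ne_top
  have hker : ∀ y ∈ E, (ENNReal.ofReal (s y)) ^ (α - (n:ℝ)*m) ≤
      ENNReal.ofReal (t ^ (α - (n:ℝ)*m)) := by
    intro y hy
    have hst : 0 < s y := lt_of_lt_of_le ht hy.1
    rw [ENNReal.ofReal_rpow_of_pos hst]
    exact ENNReal.ofReal_le_ofReal
      (Real.rpow_le_rpow_of_nonpos ht hy.1 (by linarith))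
  have hEQ : E ⊆ Set.pi univ (fun _ => Q) := by
    intro y hy i _
    have h1 : dist x (y i) ≤ s y := by
      refine Finset.single_le_sum (f := fun i => dist x (y i)) (fun j _ => dist_nonneg)
        (Finset.mem_univ i)
    have : dist (y i) x ≤ R := by rw [dist_comm]; exact h1.trans hy.2.le
    exact Metric.mem_closedBall.mpr this
  have hbox : ∫⁻ y in Set.pi univ (fun _ => Q), ∏ i, g i (y i) ≤
      ∏ i, ∫⁻ y in Q, g i y := by
    rw [← lintegral_indicator (MeasurableSet.univ_pi fun _ => hQm)]
    have hind : (Set.pi univ (fun _ => Q)).indicator (fun y => ∏ i, g i (y i)) =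
        fun y => ∏ i, Q.indicator (g i) (y i) := by
      funext y
      by_cases hy : y ∈ Set.pi univ (fun _ => Q)
      · rw [Set.indicator_of_mem hy]
        exact Finset.prod_congr rfl fun i _ =>
          (Set.indicator_of_mem (hy i trivial) _).symm
      · rw [Set.indicator_of_notMem hy]
        obtain ⟨i, hi⟩ := by simpa [Set.mem_pi] using hy
        exact (Finset.prod_eq_zero (Finset.mem_univ i)
          (by rw [Set.indicator_of_notMem hi])).symm
    have hfinQ : ∀ i, ∫⁻ y in Q, g i y ≠ ⊤ := by
      intro i
      obtain ⟨M, hM⟩ := hfb i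
      have hle : ∫⁻ y in Q, g i y ≤ ENNReal.ofReal M * vol x R := by
        calc ∫⁻ y in Q, g i y ≤ ∫⁻ _ in Q, ENNReal.ofReal M := by
              refine lintegral_mono fun y => ENNReal.ofReal_le_ofReal (hM y)
          _ = ENNReal.ofReal M * vol x R := by rw [setLIntegral_const]; rfl
      exact ne_top_of_le_ne_top (ENNReal.mul_ne_top ofReal_ne_top hvolt) hle
    rw [hind]
    have hvolrw : (volume : Measure (Fin m → Rn n)) = Measure.pi fun _ => volume :=
      volume_pi
    rw [hvolrw]
    refine (lintegral_pi_prod_le' (fun _ : Fin m => (volume : Measure (Rn n)))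
      (fun _ => inferInstance) (fun i => Q.indicator (g i))
      (fun i y => by by_cases hy : y ∈ Q <;> simp [Set.indicator_apply, hy, hgdef])
      (fun i => by rw [lintegral_indicator hQm]; exact hfinQ i)).trans
      (le_of_eq (Finset.prod_congr rfl fun i _ => by rw [lintegral_indicator hQm]))
  have havg : ∀ i, ∫⁻ y in Q, g i y = vol x R * avg x R (g i) := by
    intro i
    rw [avg, ← mul_assoc, ENNReal.mul_inv_cancel hvol0 hvolt, one_mul]
  calc ∫⁻ y in E, (∏ i, g i (y i)) * (ENNReal.ofReal (s y)) ^ (α - (n:ℝ)*m)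
      ≤ ∫⁻ y in E, (∏ i, g i (y i)) * ENNReal.ofReal (t ^ (α - (n:ℝ)*m)) := by
        refine setLIntegral_mono' hE fun y hy => ?_
        exact mul_le_mul_right (hker y hy) _
    _ = ENNReal.ofReal (t ^ (α - (n:ℝ)*m)) * ∫⁻ y in E, ∏ i, g i (y i) := by
        rw [lintegral_mul_const' _ _ ofReal_ne_top, mul_comm]
    _ ≤ ENNReal.ofReal (t ^ (α - (n:ℝ)*m)) * ∏ i, ∫⁻ y in Q, g i y := by
        refine mul_le_mul_right ((lintegral_mono_set hEQ).trans hbox) _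
    _ = ENNReal.ofReal (t ^ (α - (n:ℝ)*m)) *
          ((vol x R) ^ (((n:ℝ)*m - β)/(n:ℝ)) *
            ((vol x R) ^ (β/(n:ℝ)) * ∏ i, avg x R (g i))) := by
        rw [Finset.prod_congr rfl fun i _ => havg i, Finset.prod_mul_distrib,
          Finset.prod_const, Finset.card_univ, Fintype.card_fin]
        congr 1
        rw [← mul_assoc, ← ENNReal.rpow_add _ _ hvol0 hvolt]
        rw [show ((n:ℝ)*m - β)/(n:ℝ) + β/(n:ℝ) = (m:ℝ) by field_simp; ring,
          ENNReal.rpow_natCast]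
    _ ≤ ENNReal.ofReal (t ^ (α - (n:ℝ)*m)) *
          ((vol x R) ^ (((n:ℝ)*m - β)/(n:ℝ)) * mfm β g x) := by
        refine mul_le_mul_right (mul_le_mul_right ?_ _) _
        exact le_mfm β g x x R hR (Metric.mem_closedBall_self hR.le)
    _ = ENNReal.ofReal ((4:ℝ) ^ ((n:ℝ)*m - β) * (2:ℝ) ^ ((k:ℝ) * (α - β))) *
          mfm β g x := by
        rw [← mul_assoc]
        congr 1
        have h4t : (0:ℝ) < 4*t := by linarith
        have hvrp : (vol x R) ^ (((n:ℝ)*m - β)/(n:ℝ)) =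
            ENNReal.ofReal ((4*t) ^ ((n:ℝ)*m - β)) := by
          rw [hvol, ← Real.rpow_natCast (4*t) n, ENNReal.ofReal_rpow_of_pos
            (Real.rpow_pos_of_pos h4t _), ← Real.rpow_mul h4t.le]
          congr 1
          field_simp
        rw [hvrp, ← ENNReal.ofReal_mul (Real.rpow_pos_of_pos ht _).le]
        congr 1
        rw [Real.mul_rpow (by norm_num) ht.le]
        have htr : t ^ (α - (n:ℝ)*m) * t ^ ((n:ℝ)*m - β) = t ^ (α - β) := by
          rw [← Real.rpow_add ht]; ring_nf
        have ht2 : t ^ (α - β) = (2:ℝ) ^ ((k:ℝ) * (α - β)) := by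
          rw [htdef, ← Real.rpow_intCast 2 k, ← Real.rpow_mul (by norm_num)]
        calc t ^ (α - (n:ℝ)*m) * ((4:ℝ) ^ ((n:ℝ)*m - β) * t ^ ((n:ℝ)*m - β))
            = (4:ℝ) ^ ((n:ℝ)*m - β) * (t ^ (α - (n:ℝ)*m) * t ^ ((n:ℝ)*m - β)) := by ring
          _ = (4:ℝ) ^ ((n:ℝ)*m - β) * (2:ℝ) ^ ((k:ℝ) * (α - β)) := by rw [htr, ht2]

lemma shell_mem' {a : ℝ} (ha : 0 < a) :
    (2:ℝ) ^ (⌊Real.logb 2 a⌋ : ℤ) ≤ a ∧ a < (2:ℝ) ^ (⌊Real.logb 2 a⌋ + 1 : ℤ) := by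
  set L := Real.logb 2 a with hL
  have h2 : a = (2:ℝ) ^ L := (Real.rpow_logb two_pos (by norm_num) ha).symm
  constructor
  · rw [← Real.rpow_intCast 2 ⌊L⌋]
    calc (2:ℝ) ^ ((⌊L⌋ : ℤ) : ℝ) ≤ (2:ℝ) ^ L :=
          Real.rpow_le_rpow_of_exponent_le one_le_two (Int.floor_le L)
      _ = a := h2.symm
  · rw [← Real.rpow_intCast 2 (⌊L⌋ + 1)]
    calc a = (2:ℝ) ^ L := h2
      _ < (2:ℝ) ^ (((⌊L⌋ + 1 : ℤ)) : ℝ) := by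
          refine Real.rpow_lt_rpow_of_exponent_lt one_lt_two ?_
          push_cast
          exact Int.lt_floor_add_one L

lemma lintegral_le_tsum_shells {n m : ℕ} (hn : 0 < n) (hm : 0 < m) (x : Rn n)
    (F : (Fin m → Rn n) → ℝ≥0∞) :
    ∫⁻ y, F y ≤ ∑' k : ℤ, ∫⁻ y in
      {y : Fin m → Rn n |
        (2:ℝ)^(k:ℤ) ≤ ∑ i, dist x (y i) ∧ (∑ i, dist x (y i)) < (2:ℝ)^(k+1:ℤ)}, F y := by
  haveI : Nonempty (Fin n) := ⟨⟨0, hn⟩⟩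
  haveI : Nonempty (Fin m) := ⟨⟨0, hm⟩⟩
  set s : (Fin m → Rn n) → ℝ := fun y => ∑ i, dist x (y i) with hs
  have hs0 : ∀ y, 0 ≤ s y := fun y => Finset.sum_nonneg fun i _ => dist_nonneg
  have hnull : volume {y : Fin m → Rn n | ¬ 0 < s y} = 0 := by
    refine measure_mono_null (s := {y : Fin m → Rn n | ¬ 0 < s y})
      (t := {(fun _ => x : Fin m → Rn n)}) ?_ (measure_singleton _)
    intro y hy
    have h0 : s y = 0 := le_antisymm (not_lt.mp hy) (hs0 y)
    have hdist : ∀ i, dist x (y i) = 0 := by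
      intro i
      have := (Finset.sum_eq_zero_iff_of_nonneg (fun i _ => dist_nonneg)).mp h0
      exact this i (Finset.mem_univ i)
    have : y = fun _ => x := by
      funext i
      have := hdist i
      rw [dist_comm] at this
      exact dist_eq_zero.mp this
    simpa [Set.mem_singleton_iff] using this
  have h1 : ∫⁻ y, F y = ∫⁻ y in {y | 0 < s y}, F y := by
    rw [← setLIntegral_univ F]
    refine (setLIntegral_congr ?_).symm
    rw [Filter.eventuallyEq_set]
    filter_upwards [measure_eq_zero_iff_ae_notMem.mp hnull] with y hy
    simpa using not_not.mp hy
  rw [h1]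
  refine le_trans (lintegral_mono_set ?_) (lintegral_iUnion_le _ _)
  intro y hy
  simp only [Set.mem_iUnion]
  exact ⟨⌊Real.logb 2 (s y)⌋, shell_mem' hy⟩

lemma opt_real (a b ε KR : ℝ) (ha : 0 < a) (hb : 0 < b) (hε : 0 < ε)
    (hK1 : Real.logb 2 (a/b) / 2 ≤ KR * ε) (hK2 : KR * ε ≤ Real.logb 2 (a/b) / 2 + ε) :
    a * (2:ℝ) ^ (-(KR * ε)) ≤ (a*b) ^ ((1:ℝ)/2) ∧
      (2:ℝ) ^ (KR * ε) * b ≤ (2:ℝ)^ε * (a*b) ^ ((1:ℝ)/2) := by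
  have hab : 0 < a/b := div_pos ha hb
  have hsqa : a ^ ((1:ℝ)/2) * a ^ ((1:ℝ)/2) = a := by
    rw [← Real.rpow_add ha]; norm_num
  have hsqb : b ^ ((1:ℝ)/2) * b ^ ((1:ℝ)/2) = b := by
    rw [← Real.rpow_add hb]; norm_num
  have hL : (a/b) ^ ((1:ℝ)/2) = (2:ℝ) ^ (Real.logb 2 (a/b) / 2) := by
    rw [show Real.logb 2 (a/b) / 2 = Real.logb 2 (a/b) * (1/2) by ring,
      Real.rpow_mul (by norm_num), Real.rpow_logb two_pos (by norm_num) hab]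
  have hdivmul : (a/b) ^ ((1:ℝ)/2) * (a*b) ^ ((1:ℝ)/2) = a := by
    rw [← Real.mul_rpow hab.le (by positivity)]
    rw [show a/b*(a*b) = a*a by field_simp]
    rw [Real.mul_rpow ha.le ha.le, hsqa]
  have hdivb : (a/b) ^ ((1:ℝ)/2) * b = (a*b) ^ ((1:ℝ)/2) := by
    rw [show (a*b : ℝ) = (a/b)*(b*b) by field_simp,
      Real.mul_rpow hab.le (by positivity), Real.mul_rpow hb.le hb.le, hsqb]
  have hcancel : (2:ℝ)^(KR * ε) * (2:ℝ)^(-(KR * ε)) = 1 := by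
    rw [← Real.rpow_add two_pos]; norm_num
  constructor
  · have h1 : (a/b) ^ ((1:ℝ)/2) ≤ (2:ℝ)^(KR*ε) := by
      rw [hL]
      exact Real.rpow_le_rpow_of_exponent_le one_le_two hK1
    have h2 : a ≤ (2:ℝ)^(KR*ε) * (a*b) ^ ((1:ℝ)/2) := by
      calc a = (a/b) ^ ((1:ℝ)/2) * (a*b) ^ ((1:ℝ)/2) := hdivmul.symm
        _ ≤ (2:ℝ)^(KR*ε) * (a*b) ^ ((1:ℝ)/2) :=
            mul_le_mul_of_nonneg_right h1 (by positivity)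
    calc a * (2:ℝ) ^ (-(KR * ε)) ≤ ((2:ℝ)^(KR*ε) * (a*b) ^ ((1:ℝ)/2)) * (2:ℝ) ^ (-(KR*ε)) :=
          mul_le_mul_of_nonneg_right h2 (by positivity)
      _ = (a*b) ^ ((1:ℝ)/2) * ((2:ℝ)^(KR*ε) * (2:ℝ) ^ (-(KR*ε))) := by ring
      _ = (a*b) ^ ((1:ℝ)/2) := by rw [hcancel, mul_one]
  · have h1 : (2:ℝ)^(KR*ε) ≤ (2:ℝ)^ε * (a/b) ^ ((1:ℝ)/2) := by
      rw [hL, ← Real.rpow_add two_pos]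
      exact Real.rpow_le_rpow_of_exponent_le one_le_two (by linarith)
    calc (2:ℝ)^(KR*ε) * b ≤ ((2:ℝ)^ε * (a/b) ^ ((1:ℝ)/2)) * b :=
          mul_le_mul_of_nonneg_right h1 hb.le
      _ = (2:ℝ)^ε * ((a/b) ^ ((1:ℝ)/2) * b) := by ring
      _ = (2:ℝ)^ε * (a*b) ^ ((1:ℝ)/2) := by rw [hdivb]

/-- Welland-type inequality:
`|𝓘_α f⃗(x)| ≤ C (𝓜_{α+ε} f⃗(x) · 𝓜_{α-ε} f⃗(x))^{1/2}`. -/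
theorem stmt14 {n m : ℕ} (hn : 0 < n) (hm : 0 < m) (α ε : ℝ) (hα : 0 < α)
    (hαnm : α < (n:ℝ)*m) (hε : 0 < ε) (hεα : ε < min α ((n:ℝ)*m - α)) :
    ∃ C : ℝ, 0 < C ∧ ∀ f : Fin m → Rn n → ℝ,
      (∀ i, ∃ M : ℝ, ∀ y, |f i y| ≤ M) → (∀ i, HasCompactSupport (f i)) →
      ∀ x : Rn n,
        Ia α (fun i y => ENNReal.ofReal |f i y|) x ≤
          ENNReal.ofReal C *
            (mfm (α+ε) (fun i y => ENNReal.ofReal |f i y|) x *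
              mfm (α-ε) (fun i y => ENNReal.ofReal |f i y|) x) ^ ((1:ℝ)/2) := by
  obtain ⟨hεa, hεb⟩ := lt_min_iff.mp hεα
  have hn' : (0:ℝ) < n := Nat.cast_pos.mpr hn
  have hm' : (0:ℝ) < m := Nat.cast_pos.mpr hm
  set q : ℝ := (2:ℝ)^(-ε) with hqdef
  have hq0 : 0 ≤ q := (Real.rpow_pos_of_pos two_pos _).le
  have hq1 : q < 1 := two_rpow_lt_one' hε
  set G : ℝ := (1 - q)⁻¹ with hGdef
  have hG : 0 < G := inv_pos.mpr (by linarith)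
  set cp : ℝ := (4:ℝ)^((n:ℝ)*m - (α+ε)) with hcpdef
  set cm : ℝ := (4:ℝ)^((n:ℝ)*m - (α-ε)) with hcmdef
  have hcp0 : 0 < cp := Real.rpow_pos_of_pos (by norm_num) _
  have hcm0 : 0 < cm := Real.rpow_pos_of_pos (by norm_num) _
  have h2e : 0 < (2:ℝ)^ε := Real.rpow_pos_of_pos two_pos _
  have hC : 0 < cp * G + cm * G * (2:ℝ)^ε :=
    add_pos (mul_pos hcp0 hG) (mul_pos (mul_pos hcm0 hG) h2e)
  refine ⟨cp * G + cm * G * (2:ℝ)^ε, hC, ?_⟩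
  intro f hfb _ x
  set g : Fin m → Rn n → ℝ≥0∞ := fun i y => ENNReal.ofReal |f i y| with hgdef
  set A := mfm (α+ε) g x with hAdef
  set B := mfm (α-ε) g x with hBdef
  set I : ℤ → ℝ≥0∞ := fun k => ∫⁻ y : Fin m → Rn n in
    {y | (2:ℝ)^(k:ℤ) ≤ ∑ i, dist x (y i) ∧ ∑ i, dist x (y i) < (2:ℝ)^(k+1:ℤ)},
    (∏ i, g i (y i)) * (ENNReal.ofReal (∑ i, dist x (y i))) ^ (α - (n:ℝ)*m) with hIdef
  have hcover : Ia α g x ≤ ∑' k : ℤ, I k := lintegral_le_tsum_shells hn hm x _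
  have hplus : ∀ k : ℤ, I k ≤
      ENNReal.ofReal cp * (ENNReal.ofReal ((2:ℝ)^(-((k:ℝ)*ε))) * A) := by
    intro k
    have h := key_est hn hm α (α+ε) (by linarith) (by linarith) (by linarith) f hfb x k
    rw [show α - (α+ε) = -ε by ring, show ∀ kr : ℝ, kr * -ε = -(kr*ε) from fun kr => by ring,
      ENNReal.ofReal_mul (Real.rpow_pos_of_pos (by norm_num : (0:ℝ) < 4) _).le,
      mul_assoc] at h
    exact h
  have hminus : ∀ k : ℤ, I k ≤
      ENNReal.ofReal cm * (ENNReal.ofReal ((2:ℝ)^((k:ℝ)*ε)) * B) := by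
    intro k
    have h := key_est hn hm α (α-ε) (by linarith) (by linarith) (by linarith) f hfb x k
    rw [show α - (α-ε) = ε by ring,
      ENNReal.ofReal_mul (Real.rpow_pos_of_pos (by norm_num : (0:ℝ) < 4) _).le,
      mul_assoc] at h
    exact h
  by_cases hA0 : A = 0
  · have hIk : ∀ k : ℤ, I k = 0 :=
      fun k => le_antisymm (by simpa [hA0] using hplus k) zero_le
    have h0 : Ia α g x ≤ 0 := hcover.trans (le_of_eq (by simp [hIk]))
    exact h0.trans zero_le
  by_cases hB0 : B = 0
  · have hIk : ∀ k : ℤ, I k = 0 :=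
      fun k => le_antisymm (by simpa [hB0] using hminus k) zero_le
    have h0 : Ia α g x ≤ 0 := hcover.trans (le_of_eq (by simp [hIk]))
    exact h0.trans zero_le
  by_cases hAB : A = ⊤ ∨ B = ⊤
  · have htop : (A*B) ^ ((1:ℝ)/2) = ⊤ := by
      have hab : A*B = ⊤ := by
        rcases hAB with h|h
        · rw [h]; exact ENNReal.top_mul hB0
        · rw [h]; exact ENNReal.mul_top hA0
      rw [hab]; exact ENNReal.top_rpow_of_pos (by norm_num)
    rw [htop, ENNReal.mul_top (ENNReal.ofReal_pos.mpr hC).ne']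
    exact le_top
  push_neg at hAB
  obtain ⟨hAt, hBt⟩ := hAB
  set a := A.toReal with hadef
  set b := B.toReal with hbdef
  have ha : 0 < a := ENNReal.toReal_pos hA0 hAt
  have hb : 0 < b := ENNReal.toReal_pos hB0 hBt
  have hAa : A = ENNReal.ofReal a := (ENNReal.ofReal_toReal hAt).symm
  have hBb : B = ENNReal.ofReal b := (ENNReal.ofReal_toReal hBt).symm
  set K : ℤ := ⌈Real.logb 2 (a/b) / (2*ε)⌉ with hKdef
  have hmulid : Real.logb 2 (a/b) / (2*ε) * ε = Real.logb 2 (a/b) / 2 := by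
    field_simp
  have hK1 : Real.logb 2 (a/b) / 2 ≤ (K:ℝ) * ε := by
    have h := mul_le_mul_of_nonneg_right (Int.le_ceil (Real.logb 2 (a/b) / (2*ε))) hε.le
    rw [hmulid] at h
    exact h
  have hK2 : (K:ℝ) * ε ≤ Real.logb 2 (a/b) / 2 + ε := by
    have h := mul_le_mul_of_nonneg_right
      (Int.ceil_lt_add_one (Real.logb 2 (a/b) / (2*ε))).le hε.le
    rw [add_mul, one_mul, hmulid] at h
    exact h
  obtain ⟨r1, r2⟩ := opt_real a b ε (K:ℝ) ha hb hε hK1 hK2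
  set S : ℝ := (a*b) ^ ((1:ℝ)/2) with hSdef
  have hS : 0 < S := Real.rpow_pos_of_pos (mul_pos ha hb) _
  have hsplit : ∀ k : ℤ, I k ≤
      ENNReal.ofReal cp * ((if K ≤ k then ENNReal.ofReal ((2:ℝ)^(-((k:ℝ)*ε))) else 0) * A)
      + ENNReal.ofReal cm * ((if k < K then ENNReal.ofReal ((2:ℝ)^((k:ℝ)*ε)) else 0) * B) := by
    intro k
    by_cases hk : K ≤ k
    · rw [if_pos hk, if_neg (not_lt.mpr hk)]
      exact le_trans (hplus k) le_self_add
    · rw [if_neg hk, if_pos (not_le.mp hk)]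
      exact le_trans (hminus k) le_add_self
  calc Ia α g x ≤ ∑' k : ℤ, I k := hcover
    _ ≤ ∑' k : ℤ,
        (ENNReal.ofReal cp * ((if K ≤ k then ENNReal.ofReal ((2:ℝ)^(-((k:ℝ)*ε))) else 0) * A)
        + ENNReal.ofReal cm * ((if k < K then ENNReal.ofReal ((2:ℝ)^((k:ℝ)*ε)) else 0) * B)) :=
        ENNReal.tsum_le_tsum hsplit
    _ = ENNReal.ofReal cp *
          ((∑' k : ℤ, (if K ≤ k then ENNReal.ofReal ((2:ℝ)^(-((k:ℝ)*ε))) else 0)) * A)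
        + ENNReal.ofReal cm *
          ((∑' k : ℤ, (if k < K then ENNReal.ofReal ((2:ℝ)^((k:ℝ)*ε)) else 0)) * B) := by
        rw [ENNReal.tsum_add]
        congr 1
        · rw [ENNReal.tsum_mul_left, ENNReal.tsum_mul_right]
        · rw [ENNReal.tsum_mul_left, ENNReal.tsum_mul_right]
    _ ≤ ENNReal.ofReal cp * (ENNReal.ofReal ((2:ℝ)^(-((K:ℝ)*ε)) * G) * A)
        + ENNReal.ofReal cm * (ENNReal.ofReal ((2:ℝ)^((K:ℝ)*ε) * G) * B) := by
        refine add_le_add (mul_le_mul_right (mul_le_mul_left (tailA ε hε K) A) _)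
          (mul_le_mul_right (mul_le_mul_left (tailB ε hε K) B) _)
    _ ≤ ENNReal.ofReal cp * ENNReal.ofReal (G * S)
        + ENNReal.ofReal cm * ENNReal.ofReal (G * ((2:ℝ)^ε * S)) := by
        refine add_le_add (mul_le_mul_right ?_ _) (mul_le_mul_right ?_ _)
        · rw [hAa, ← ENNReal.ofReal_mul
            (mul_nonneg (Real.rpow_pos_of_pos two_pos _).le hG.le)]
          refine ENNReal.ofReal_le_ofReal ?_
          calc (2:ℝ)^(-((K:ℝ)*ε)) * G * a = G * (a * (2:ℝ)^(-((K:ℝ)*ε))) := by ring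
            _ ≤ G * S := mul_le_mul_of_nonneg_left r1 hG.le
        · rw [hBb, ← ENNReal.ofReal_mul
            (mul_nonneg (Real.rpow_pos_of_pos two_pos _).le hG.le)]
          refine ENNReal.ofReal_le_ofReal ?_
          calc (2:ℝ)^((K:ℝ)*ε) * G * b = G * ((2:ℝ)^((K:ℝ)*ε) * b) := by ring
            _ ≤ G * ((2:ℝ)^ε * S) := mul_le_mul_of_nonneg_left r2 hG.le
    _ = ENNReal.ofReal ((cp * G + cm * G * (2:ℝ)^ε) * S) := by
        rw [← ENNReal.ofReal_mul hcp0.le, ← ENNReal.ofReal_mul hcm0.le,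
          ← ENNReal.ofReal_add
            (mul_nonneg hcp0.le (mul_nonneg hG.le hS.le))
            (mul_nonneg hcm0.le (mul_nonneg hG.le (mul_nonneg h2e.le hS.le)))]
        congr 1
        ring
    _ = ENNReal.ofReal (cp * G + cm * G * (2:ℝ)^ε) * (A*B) ^ ((1:ℝ)/2) := by
        rw [hAa, hBb, ← ENNReal.ofReal_mul ha.le,
          ENNReal.ofReal_rpow_of_pos (mul_pos ha hb), ENNReal.ofReal_mul hC.le]

end Frac
end
end

section
/- Let g be any locally integrable function such that Mg is finite a.e. and let β > 0. Then (Mg)^{-β} belongs to RH_∞, i.e., there is C such that sup_{x∈Q} (Mg(x))^{-β} ≤ (C/|Q|)∫_Q (Mg)^{-β} for every cube Q. -/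
open MeasureTheory ENNReal Set
open scoped BigOperators NNReal

noncomputable section
namespace Frac

lemma vol_def {n : ℕ} (c : Rn n) {r : ℝ} (hr : 0 ≤ r) :
    vol c r = ENNReal.ofReal ((2*r)^n) := by
  rw [vol, cube, Real.volume_pi_closedBall c hr, Fintype.card_fin]

lemma vol_pos {n : ℕ} (c : Rn n) {r : ℝ} (hr : 0 < r) : 0 < vol c r := by
  rw [vol_def c hr.le]
  exact ENNReal.ofReal_pos.2 (pow_pos (by linarith) n)

lemma vol_ne_top {n : ℕ} (c : Rn n) (r : ℝ) : vol c r ≠ ⊤ := by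
  rcases le_or_gt 0 r with h | h
  · rw [vol_def c h]; exact ENNReal.ofReal_ne_top
  · rw [vol, cube, Metric.closedBall_eq_empty.2 h]; simp

lemma vol_smul {n : ℕ} (c c' : Rn n) {k r : ℝ} (hk : 0 ≤ k) (hr : 0 ≤ r) :
    vol c (k*r) = ENNReal.ofReal k ^ n * vol c' r := by
  rw [vol_def c (mul_nonneg hk hr), vol_def c' hr, ← ENNReal.ofReal_pow hk,
    ← ENNReal.ofReal_mul (pow_nonneg hk n), ← mul_pow]
  ring_nf

lemma HL_eq {n : ℕ} (h : Rn n → ℝ≥0∞) (x : Rn n) :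
    HL h x = ⨆ (c : Rn n) (r : ℝ) (_ : 0 < r) (_ : x ∈ cube c r), avg c r h := by
  simp [HL, lfm, zero_div, ENNReal.rpow_zero, one_mul]

lemma avg_le_HL {n : ℕ} (h : Rn n → ℝ≥0∞) {x c : Rn n} {r : ℝ}
    (hr : 0 < r) (hx : x ∈ cube c r) : avg c r h ≤ HL h x := by
  rw [HL_eq]
  exact le_iSup_of_le c (le_iSup_of_le r (le_iSup_of_le hr (le_iSup_of_le hx le_rfl)))
lemma lintegral_le_vol_mul_HL {n : ℕ} (h : Rn n → ℝ≥0∞) {x c : Rn n} {r : ℝ}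
    (hr : 0 < r) (hx : x ∈ cube c r) :
    ∫⁻ y in cube c r, h y ≤ vol c r * HL h x := by
  have h1 : (vol c r) * ((vol c r)⁻¹ * ∫⁻ y in cube c r, h y) ≤ vol c r * HL h x :=
    mul_le_mul_right (avg_le_HL h hr hx) _
  rwa [← mul_assoc, ENNReal.mul_inv_cancel (vol_pos c hr).ne' (vol_ne_top c r), one_mul] at h1

lemma avg_big {n : ℕ} (h : Rn n → ℝ≥0∞) {c c' x y : Rn n} {r r' : ℝ}
    (hr : 0 < r) (hrr' : r ≤ r') (hx : x ∈ cube c r) (hy : y ∈ cube c r)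
    (hy' : y ∈ cube c' r') :
    avg c' r' h ≤ (3:ℝ≥0∞)^n * HL h x := by
  have hr' : 0 < r' := lt_of_lt_of_le hr hrr'
  rw [cube, Metric.mem_closedBall] at hx hy hy'
  have hx'' : x ∈ cube c' (r' + 2*r) := by
    rw [cube, Metric.mem_closedBall]
    calc dist x c' ≤ dist x y + dist y c' := dist_triangle _ _ _
    _ ≤ (dist x c + dist y c) + dist y c' := by
        gcongr
        calc dist x y ≤ dist x c + dist c y := dist_triangle _ _ _
        _ = dist x c + dist y c := by rw [dist_comm c y]
    _ ≤ (r + r) + r' := by gcongr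
    _ = r' + 2*r := by ring
  have hvol : vol c' (r' + 2*r) ≤ (3:ℝ≥0∞)^n * vol c' r' := by
    have h3 : vol c' (3 * r') = ENNReal.ofReal 3 ^ n * vol c' r' :=
      vol_smul c' c' (by norm_num) hr'.le
    have hmono : vol c' (r' + 2*r) ≤ vol c' (3 * r') := by
      apply measure_mono
      exact Metric.closedBall_subset_closedBall (by linarith)
    rw [h3] at hmono
    simpa using hmono
  have hI : ∫⁻ z in cube c' r', h z ≤ ∫⁻ z in cube c' (r' + 2*r), h z :=
    lintegral_mono_set (Metric.closedBall_subset_closedBall (by linarith))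
  have hI2 : ∫⁻ z in cube c' (r' + 2*r), h z ≤ vol c' (r' + 2*r) * HL h x :=
    lintegral_le_vol_mul_HL h (by linarith : (0:ℝ) < r' + 2*r) hx''
  calc avg c' r' h = (vol c' r')⁻¹ * ∫⁻ z in cube c' r', h z := rfl
  _ ≤ (vol c' r')⁻¹ * (vol c' (r' + 2*r) * HL h x) := by
      exact mul_le_mul_right (hI.trans hI2) _
  _ ≤ (vol c' r')⁻¹ * (((3:ℝ≥0∞)^n * vol c' r') * HL h x) := by
      exact mul_le_mul_right (mul_le_mul_left hvol _) _
  _ = ((vol c' r')⁻¹ * vol c' r') * ((3:ℝ≥0∞)^n * HL h x) := by ring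
  _ = (3:ℝ≥0∞)^n * HL h x := by
      rw [ENNReal.inv_mul_cancel (vol_pos c' hr').ne' (vol_ne_top c' r'), one_mul]
lemma cube_subset_big {n : ℕ} {c c' : Rn n} {r r' : ℝ} (hr' : r' ≤ r)
    (hne : (cube c' r' ∩ cube c r).Nonempty) : cube c' r' ⊆ cube c (3*r) := by
  obtain ⟨z, hz', hz⟩ := hne
  intro w hw
  rw [cube, Metric.mem_closedBall] at *
  calc dist w c ≤ dist w c' + dist c' z + dist z c := dist_triangle4 _ _ _ _
  _ ≤ r' + r' + r := by
      gcongr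
      rw [dist_comm]; exact hz'
  _ ≤ 3*r := by linarith
lemma arith_half {n : ℕ} (a v : ℝ≥0∞) (ha0 : a ≠ 0) (hat : a ≠ ⊤) :
    (4:ℝ≥0∞)^n * ((2 * 12^n) * a)⁻¹ * ((3:ℝ≥0∞)^n * v * a) = 2⁻¹ * v := by
  rw [ENNReal.mul_inv (Or.inl (mul_ne_zero two_ne_zero (pow_ne_zero _ (by norm_num))))
      (Or.inl (ENNReal.mul_ne_top (by norm_num) (ENNReal.pow_ne_top (by norm_num)))),
    ENNReal.mul_inv (Or.inl two_ne_zero) (Or.inl ENNReal.ofNat_ne_top)]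
  have h1 : (4:ℝ≥0∞)^n * (3:ℝ≥0∞)^n * ((12:ℝ≥0∞)^n)⁻¹ = 1 := by
    rw [← mul_pow]
    norm_num
    exact ENNReal.mul_inv_cancel (pow_ne_zero _ (by norm_num)) (ENNReal.pow_ne_top (by norm_num))
  have h2 : a⁻¹ * a = 1 := ENNReal.inv_mul_cancel ha0 hat
  calc (4:ℝ≥0∞)^n * (2⁻¹ * ((12:ℝ≥0∞)^n)⁻¹ * a⁻¹) * ((3:ℝ≥0∞)^n * v * a)
      = ((4:ℝ≥0∞)^n * (3:ℝ≥0∞)^n * ((12:ℝ≥0∞)^n)⁻¹) * (a⁻¹ * a) * (2⁻¹ * v) := by ring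
  _ = 2⁻¹ * v := by rw [h1, h2, one_mul, one_mul]

/-- if `Mg` is finite a.e. then `(Mg)^{-β} ∈ RH_∞`. -/
theorem stmt15 {n : ℕ} (hn : 0 < n) (g : Rn n → ℝ)
    (hg : LocallyIntegrable g)
    (hfin : ∀ᵐ x, HL (fun y => ENNReal.ofReal |g y|) x ≠ ⊤)
    (β : ℝ) (hβ : 0 < β) :
    ∃ C : ℝ≥0∞, C ≠ ⊤ ∧ ∀ (c : Rn n) (r : ℝ), 0 < r → ∀ x ∈ cube c r,
      (HL (fun y => ENNReal.ofReal |g y|) x) ^ (-β) ≤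
        C * avg c r (fun y => (HL (fun z => ENNReal.ofReal |g z|) y) ^ (-β)) := by
  set h : Rn n → ℝ≥0∞ := fun y => ENNReal.ofReal |g y| with hh
  set K : ℝ≥0∞ := 2 * 12 ^ n with hK
  have hK0 : K ≠ 0 := by simp [hK]
  have hKt : K ≠ ⊤ :=
    ENNReal.mul_ne_top (by norm_num) (ENNReal.pow_ne_top (by norm_num))
  have hC0 : (2:ℝ≥0∞) * K ^ β ≠ 0 :=
    mul_ne_zero two_ne_zero (ENNReal.rpow_pos (hK0.bot_lt) hKt).ne'
  refine ⟨2 * K ^ β, ?_, ?_⟩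
  · exact ENNReal.mul_ne_top (by norm_num) (ENNReal.rpow_ne_top_of_nonneg hβ.le hKt)
  intro c r hr x hx
  set M : Rn n → ℝ≥0∞ := HL h with hM
  by_cases htop : M x = ⊤
  · rw [htop, ENNReal.top_rpow_of_neg (by linarith)]
    exact zero_le
  have hx3 : x ∈ cube c (3*r) := by
    rw [cube, Metric.mem_closedBall] at hx ⊢
    linarith
  have hr3 : (0:ℝ) < 3*r := by linarith
  by_cases hzero : M x = 0
  · -- M vanishes identically on the cube; RHS is ⊤
    have hI30 : ∫⁻ y in cube c (3*r), h y = 0 := by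
      have := lintegral_le_vol_mul_HL h hr3 hx3
      rw [← hM, hzero, mul_zero] at this
      exact le_antisymm this (zero_le)
    have hMy : ∀ y ∈ cube c r, M y = 0 := by
      intro y hy
      rw [hM, HL_eq, ← le_zero_iff]
      refine iSup_le fun c' => iSup_le fun r' => iSup_le fun hr' => iSup_le fun hy' => ?_
      rcases le_or_gt r' r with hle | hlt
      · have hsub : cube c' r' ⊆ cube c (3*r) := cube_subset_big hle ⟨y, hy', hy⟩
        have h0 : ∫⁻ z in cube c' r', h z = 0 :=
          le_antisymm ((lintegral_mono_set hsub).trans hI30.le) (zero_le)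
        rw [avg, h0, mul_zero]
      · have := avg_big h hr hlt.le hx hy hy'
        rw [← hM, hzero, mul_zero] at this
        exact this
    have hRHS : avg c r (fun y => M y ^ (-β)) = ⊤ := by
      have hconst : ∫⁻ _ in cube c r, (⊤:ℝ≥0∞) ≤ ∫⁻ y in cube c r, M y ^ (-β) := by
        refine setLIntegral_mono' (by exact measurableSet_closedBall) fun y hy => ?_
        rw [hMy y hy, ENNReal.zero_rpow_of_neg (by linarith)]
      rw [setLIntegral_const] at hconst
      have hIt : ∫⁻ y in cube c r, M y ^ (-β) = ⊤ := by
        rw [← top_le_iff]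
        calc (⊤:ℝ≥0∞) = ⊤ * vol c r := (ENNReal.top_mul (vol_pos c hr).ne').symm
        _ ≤ _ := hconst
      rw [avg, hIt, ENNReal.mul_top (ENNReal.inv_ne_zero.2 (vol_ne_top c r))]
    rw [hRHS, ENNReal.mul_top hC0]
    exact le_top
  -- main case : 0 < M x < ⊤
  set lam : ℝ≥0∞ := K * M x with hlam
  have hlam0 : lam ≠ 0 := mul_ne_zero hK0 hzero
  have hlamt : lam ≠ ⊤ := ENNReal.mul_ne_top hKt htop
  set t : Set (Rn n × ℝ) :=
    {p | 0 < p.2 ∧ p.2 ≤ r ∧ lam < avg p.1 p.2 h ∧ (cube p.1 p.2 ∩ cube c r).Nonempty} with ht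
  obtain ⟨u, hut, hdisj, hcov⟩ :=
    Vitali.exists_disjoint_subfamily_covering_enlargement_closedBall t Prod.fst Prod.snd r
      (fun p hp => hp.2.1) 4 (by norm_num)
  have hcu : u.Countable := by
    have hdisj' : u.PairwiseDisjoint fun p : Rn n × ℝ => Metric.ball p.1 p.2 :=
      hdisj.mono fun p => Metric.ball_subset_closedBall
    exact hdisj'.countable_of_isOpen (fun p _ => Metric.isOpen_ball)
      (fun p hp => Metric.nonempty_ball.2 (hut hp).1)
  haveI := hcu.to_subtype
  set U : Set (Rn n) := ⋃ p ∈ u, cube p.1 (4 * p.2) with hU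
  have hUm : MeasurableSet U :=
    MeasurableSet.biUnion hcu (fun p _ => measurableSet_closedBall)
  have hI3 : ∫⁻ y in cube c (3*r), h y ≤ vol c (3*r) * M x :=
    lintegral_le_vol_mul_HL h hr3 hx3
  have hsum : ∑' p : u, ∫⁻ y in cube (p:Rn n × ℝ).1 (p:Rn n × ℝ).2, h y
      ≤ ∫⁻ y in cube c (3*r), h y := by
    have heq := lintegral_iUnion (μ := volume)
      (s := fun p : u => cube (p:Rn n × ℝ).1 (p:Rn n × ℝ).2) (f := h)
      (fun p => measurableSet_closedBall) (hdisj.subtype _ _)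
    rw [← heq]
    exact lintegral_mono_set
      (iUnion_subset fun p => cube_subset_big (hut p.2).2.1 (hut p.2).2.2.2)
  have hvolp : ∀ p : u, volume (cube (p:Rn n × ℝ).1 (4 * (p:Rn n × ℝ).2)) ≤
      (4:ℝ≥0∞)^n * (lam⁻¹ * ∫⁻ y in cube (p:Rn n × ℝ).1 (p:Rn n × ℝ).2, h y) := by
    intro p
    obtain ⟨hp1, hp2, hp3, hp4⟩ := hut p.2
    have hv : volume (cube (p:Rn n × ℝ).1 (4 * (p:Rn n × ℝ).2)) =
        (4:ℝ≥0∞)^n * vol (p:Rn n × ℝ).1 (p:Rn n × ℝ).2 := by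
      have h4 := vol_smul (p:Rn n × ℝ).1 (p:Rn n × ℝ).1 (k := 4) (by norm_num) hp1.le
      rw [← vol, h4]
      norm_num
    rw [hv]
    refine mul_le_mul_right ?_ _
    have h1 : lam * vol (p:Rn n × ℝ).1 (p:Rn n × ℝ).2 ≤
        ∫⁻ y in cube (p:Rn n × ℝ).1 (p:Rn n × ℝ).2, h y := by
      calc lam * vol (p:Rn n × ℝ).1 (p:Rn n × ℝ).2
          ≤ avg (p:Rn n × ℝ).1 (p:Rn n × ℝ).2 h * vol (p:Rn n × ℝ).1 (p:Rn n × ℝ).2 :=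
            mul_le_mul_left hp3.le _
      _ = (vol (p:Rn n × ℝ).1 (p:Rn n × ℝ).2)⁻¹ * vol (p:Rn n × ℝ).1 (p:Rn n × ℝ).2 *
            ∫⁻ y in cube (p:Rn n × ℝ).1 (p:Rn n × ℝ).2, h y := by rw [avg]; ring
      _ = ∫⁻ y in cube (p:Rn n × ℝ).1 (p:Rn n × ℝ).2, h y := by
            rw [ENNReal.inv_mul_cancel (vol_pos _ hp1).ne' (vol_ne_top _ _), one_mul]
    calc vol (p:Rn n × ℝ).1 (p:Rn n × ℝ).2
        = lam⁻¹ * (lam * vol (p:Rn n × ℝ).1 (p:Rn n × ℝ).2) := by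
          rw [← mul_assoc, ENNReal.inv_mul_cancel hlam0 hlamt, one_mul]
    _ ≤ lam⁻¹ * ∫⁻ y in cube (p:Rn n × ℝ).1 (p:Rn n × ℝ).2, h y := mul_le_mul_right h1 _
  have hUle : volume U ≤ 2⁻¹ * vol c r := by
    have h1 : volume U ≤ ∑' p : u, volume (cube (p:Rn n × ℝ).1 (4 * (p:Rn n × ℝ).2)) :=
      measure_biUnion_le volume hcu _
    have h2 : volume U ≤ (4:ℝ≥0∞)^n * (lam⁻¹ * ∫⁻ y in cube c (3*r), h y) := by
      refine h1.trans ?_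
      calc ∑' p : u, volume (cube (p:Rn n × ℝ).1 (4 * (p:Rn n × ℝ).2))
          ≤ ∑' p : u, (4:ℝ≥0∞)^n * (lam⁻¹ * ∫⁻ y in cube (p:Rn n × ℝ).1 (p:Rn n × ℝ).2, h y) :=
            ENNReal.tsum_le_tsum hvolp
      _ = (4:ℝ≥0∞)^n * (lam⁻¹ * ∑' p : u, ∫⁻ y in cube (p:Rn n × ℝ).1 (p:Rn n × ℝ).2, h y) := by
            rw [ENNReal.tsum_mul_left, ENNReal.tsum_mul_left]
      _ ≤ (4:ℝ≥0∞)^n * (lam⁻¹ * ∫⁻ y in cube c (3*r), h y) :=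
            mul_le_mul_right (mul_le_mul_right hsum _) _
    refine h2.trans ?_
    have hv3 : vol c (3*r) = (3:ℝ≥0∞)^n * vol c r := by
      have h3 := vol_smul c c (k := 3) (by norm_num) hr.le
      rw [h3]; norm_num
    calc (4:ℝ≥0∞)^n * (lam⁻¹ * ∫⁻ y in cube c (3*r), h y)
        ≤ (4:ℝ≥0∞)^n * (lam⁻¹ * (vol c (3*r) * M x)) :=
          mul_le_mul_right (mul_le_mul_right hI3 _) _
    _ = (4:ℝ≥0∞)^n * lam⁻¹ * ((3:ℝ≥0∞)^n * vol c r * M x) := by rw [hv3]; ring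
    _ = 2⁻¹ * vol c r := by rw [hlam, hK]; exact arith_half (M x) (vol c r) hzero htop
  -- on the cube minus U, M is at most lam
  have hgood : ∀ y ∈ cube c r \ U, M y ≤ lam := by
    rintro y ⟨hyQ, hyU⟩
    rw [hM, HL_eq]
    refine iSup_le fun c' => iSup_le fun r' => iSup_le fun hr' => iSup_le fun hy' => ?_
    rcases le_or_gt r' r with hle | hlt
    · by_contra hcon
      push_neg at hcon
      have hpt : (c', r') ∈ t := ⟨hr', hle, hcon, ⟨y, hy', hyQ⟩⟩
      obtain ⟨b, hbu, hsub⟩ := hcov _ hpt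
      exact hyU (mem_biUnion hbu (hsub hy'))
    · have h3 := avg_big h hr hlt.le hx hyQ hy'
      refine h3.trans ?_
      rw [hlam, hK]
      calc (3:ℝ≥0∞)^n * HL h x ≤ (12:ℝ≥0∞)^n * HL h x :=
            mul_le_mul_left (pow_le_pow_left₀ (by norm_num) (by norm_num) n) _
      _ ≤ 2 * 12^n * HL h x := by
            rw [mul_assoc]
            exact le_mul_of_one_le_left (zero_le) (by norm_num)
  -- measure lower bound on the good set
  have hdiff : 2⁻¹ * vol c r ≤ volume (cube c r \ U) := by
    have h1 : vol c r ≤ volume (cube c r ∩ U) + volume (cube c r \ U) :=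
      measure_le_inter_add_diff volume (cube c r) U
    have h2 : volume (cube c r ∩ U) ≤ 2⁻¹ * vol c r :=
      (measure_mono inter_subset_right).trans hUle
    have h3 : 2⁻¹ * vol c r + 2⁻¹ * vol c r ≤ 2⁻¹ * vol c r + volume (cube c r \ U) := by
      calc 2⁻¹ * vol c r + 2⁻¹ * vol c r = vol c r := by
            rw [← add_mul, ENNReal.inv_two_add_inv_two, one_mul]
      _ ≤ volume (cube c r ∩ U) + volume (cube c r \ U) := h1
      _ ≤ 2⁻¹ * vol c r + volume (cube c r \ U) := add_le_add_left h2 _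
    exact (ENNReal.add_le_add_iff_left
      (ENNReal.mul_ne_top (by norm_num) (vol_ne_top c r))).1 h3
  -- lower bound on the average
  have havg : 2⁻¹ * lam ^ (-β) ≤ avg c r (fun y => M y ^ (-β)) := by
    have hIl : lam ^ (-β) * volume (cube c r \ U) ≤ ∫⁻ y in cube c r, M y ^ (-β) := by
      calc lam ^ (-β) * volume (cube c r \ U)
          = ∫⁻ _ in cube c r \ U, lam ^ (-β) := (setLIntegral_const _ _).symm
      _ ≤ ∫⁻ y in cube c r \ U, M y ^ (-β) := by
        refine setLIntegral_mono' (measurableSet_closedBall.diff hUm) fun y hy => ?_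
        rw [ENNReal.rpow_neg, ENNReal.rpow_neg]
        exact ENNReal.inv_le_inv.2 (ENNReal.rpow_le_rpow (hgood y hy) hβ.le)
      _ ≤ ∫⁻ y in cube c r, M y ^ (-β) := lintegral_mono_set diff_subset
    calc 2⁻¹ * lam ^ (-β)
        = (vol c r)⁻¹ * (lam ^ (-β) * (2⁻¹ * vol c r)) := by
          rw [show (vol c r)⁻¹ * (lam ^ (-β) * (2⁻¹ * vol c r)) =
            2⁻¹ * lam ^ (-β) * ((vol c r)⁻¹ * vol c r) by ring,
            ENNReal.inv_mul_cancel (vol_pos c hr).ne' (vol_ne_top c r), mul_one]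
    _ ≤ (vol c r)⁻¹ * (lam ^ (-β) * volume (cube c r \ U)) :=
        mul_le_mul_right (mul_le_mul_right hdiff _) _
    _ ≤ (vol c r)⁻¹ * ∫⁻ y in cube c r, M y ^ (-β) := mul_le_mul_right hIl _
    _ = avg c r (fun y => M y ^ (-β)) := rfl
  -- conclude
  have hfinal : M x ^ (-β) = 2 * K ^ β * (2⁻¹ * lam ^ (-β)) := by
    rw [hlam, ENNReal.mul_rpow_of_ne_top hKt htop]
    have hKK : K ^ β * K ^ (-β) = 1 := by
      rw [← ENNReal.rpow_add _ _ hK0 hKt]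
      simp
    calc M x ^ (-β) = (2 * 2⁻¹) * ((K ^ β * K ^ (-β)) * M x ^ (-β)) := by
          rw [ENNReal.mul_inv_cancel two_ne_zero ENNReal.ofNat_ne_top, hKK, one_mul, one_mul]
    _ = 2 * K ^ β * (2⁻¹ * (K ^ (-β) * M x ^ (-β))) := by ring
  rw [hfinal]
  exact mul_le_mul_right havg _

end Frac
end
end

section
/- Let 1 ≤ p < n/α, 1/q = 1/p - α/n and s = 1 + q/p'. A weight w satisfies the Muckenhoupt–Wheeden A_{p,q} condition if and only if w^q ∈ A_s; in the multilinear setting with 1/q_i = 1/p_i - α/(nm) and s_i = (1-α/(nm))q_i, one has w⃗^q = (w₁^{q₁},…,w_m^{q_m}) ∈ A_{S⃗} if and only if w⃗ ∈ A_{P⃗,q}. -/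
open MeasureTheory ENNReal Set
open scoped BigOperators NNReal

noncomputable section
namespace Frac

lemma essInf_rpow {α : Type*} {mα : MeasurableSpace α} (μ : Measure α) (f : α → ℝ≥0∞)
    {e : ℝ} (he : 0 < e) :
    essInf (fun y => f y ^ e) μ = (essInf f μ) ^ e := by
  have h := (ENNReal.orderIsoRpow e he).liminf_apply (u := f) (f := (ae μ))
  simpa [ENNReal.orderIsoRpow_apply, essInf] using h.symm

lemma key_essInf {α : Type*} {mα : MeasurableSpace α} (μ : Measure α) (u : α → ℝ)
    (hu : ∀ x, 0 < u x) {e : ℝ} (he : 0 < e) :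
    essInf (fun y => ENNReal.ofReal (u y ^ e)) μ
      = (essInf (fun y => ENNReal.ofReal (u y)) μ) ^ e := by
  rw [← essInf_rpow μ (fun y => ENNReal.ofReal (u y)) he]
  exact essInf_congr_ae (Filter.Eventually.of_forall fun y =>
    (ENNReal.ofReal_rpow_of_pos (hu y)).symm)

lemma avg_congr {n : ℕ} (c : Rn n) (r : ℝ) {f g : Rn n → ℝ≥0∞} (h : ∀ y, f y = g y) :
    avg c r f = avg c r g := by
  unfold avg; rw [lintegral_congr h]

lemma bound_iff {κ : Type*} (Φ Ψ : κ → ℝ → ℝ≥0∞) {l : ℝ} (hl : 0 < l)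
    (h : ∀ c r, 0 < r → Ψ c r = (Φ c r) ^ l) :
    (∃ C : ℝ≥0∞, C ≠ ⊤ ∧ ∀ c r, 0 < r → Φ c r ≤ C) ↔
    (∃ C : ℝ≥0∞, C ≠ ⊤ ∧ ∀ c r, 0 < r → Ψ c r ≤ C) := by
  constructor
  · rintro ⟨C, hC, hb⟩
    refine ⟨C ^ l, ENNReal.rpow_ne_top_of_nonneg hl.le hC, fun c r hr => ?_⟩
    rw [h c r hr]
    exact ENNReal.rpow_le_rpow (hb c r hr) hl.le
  · rintro ⟨C, hC, hb⟩
    refine ⟨C ^ (1/l), ENNReal.rpow_ne_top_of_nonneg (by positivity) hC, fun c r hr => ?_⟩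
    have hΦ : Φ c r = (Ψ c r) ^ (1/l) := by
      rw [h c r hr, ← ENNReal.rpow_mul, mul_one_div, div_self hl.ne', ENNReal.rpow_one]
    rw [hΦ]
    exact ENNReal.rpow_le_rpow (hb c r hr) (by positivity)

/-- `w ∈ A_{p,q} ↔ w^q ∈ A_s` (Muckenhoupt–Wheeden), and the
multilinear analogue `w⃗^q ∈ A_{S⃗} ↔ w⃗ ∈ A_{P⃗,q}`. -/
theorem stmt17 {n m : ℕ} (hn : 0 < n) (hm : 0 < m) (α : ℝ) (hα : 0 < α)
    (hαn : α < n)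
    (p q s : ℝ) (hp : 1 ≤ p) (hpn : p < (n:ℝ)/α) (hq : 1/q = 1/p - α/(n:ℝ))
    (hs : s = 1 + q * (p-1)/p)
    (w : Rn n → ℝ) (hw : ∀ x, 0 < w x)
    (hαnm : α < (n:ℝ)*m)
    (P Q S : Fin m → ℝ) (qq : ℝ)
    (hP : ∀ i, 1 ≤ P i ∧ P i < (n:ℝ)*m/α)
    (hQ : ∀ i, 1/(Q i) = 1/(P i) - α/((n:ℝ)*m))
    (hS : ∀ i, S i = (1 - α/((n:ℝ)*m)) * Q i)
    (hqq : 1/qq = ∑ i, 1/(Q i))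
    (W : Fin m → Rn n → ℝ) (hW : ∀ i x, 0 < W i x) :
    (Apq p q w ↔ Amuck s (fun x => w x ^ q)) ∧
    (multiA S (fun i x => W i x ^ (Q i)) ↔ ApqMulti P qq W) := by
  have hn0 : (0:ℝ) < n := by exact_mod_cast hn
  have hm0 : (0:ℝ) < m := by exact_mod_cast hm
  have hp0 : (0:ℝ) < p := lt_of_lt_of_le one_pos hp
  have h1q : 0 < 1/q := by
    rw [hq, sub_pos, div_lt_div_iff₀ hn0 hp0]
    have := (lt_div_iff₀ hα).mp hpn
    nlinarith
  have hq0 : 0 < q := one_div_pos.mp h1q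
  have hnm0 : (0:ℝ) < (n:ℝ)*m := mul_pos hn0 hm0
  constructor
  · -- linear case
    simp only [Apq, Amuck]
    refine bound_iff _ _ hq0 ?_
    intro c r hr
    by_cases hp1 : p = 1
    · have hs1 : s = 1 := by rw [hs, hp1]; ring
      rw [if_pos hp1, if_pos hs1,
        ENNReal.mul_rpow_of_nonneg _ _ hq0.le, ← ENNReal.rpow_mul,
        one_div_mul_cancel hq0.ne', ENNReal.rpow_one, ENNReal.inv_rpow,
        ← key_essInf _ _ hw hq0]
    · have hp1' : 1 < p := lt_of_le_of_ne hp (Ne.symm hp1)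
      have hpm : (0:ℝ) < p - 1 := sub_pos.mpr hp1'
      have hs1 : s - 1 = q*(p-1)/p := by rw [hs]; ring
      have hs1pos : 0 < s - 1 := by rw [hs1]; positivity
      have hsne : s ≠ 1 := by intro h; rw [h] at hs1pos; norm_num at hs1pos
      rw [if_neg hp1, if_neg hsne,
        ENNReal.mul_rpow_of_nonneg _ _ hq0.le, ← ENNReal.rpow_mul,
        ← ENNReal.rpow_mul, one_div_mul_cancel hq0.ne', ENNReal.rpow_one]
      congr 1
      have hxp : q * (-(1/(s-1))) = -(p/(p-1)) := by
        rw [hs1]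
        field_simp
      have hint : ∀ y, ENNReal.ofReal ((w y ^ q) ^ (-(1/(s-1))))
          = ENNReal.ofReal (w y ^ (-(p/(p-1)))) := by
        intro y
        rw [← Real.rpow_mul (hw y).le, hxp]
      rw [avg_congr _ _ hint]
      congr 1
      rw [hs1]; ring
  · -- multilinear case
    have hPpos : ∀ i, (0:ℝ) < P i := fun i => lt_of_lt_of_le one_pos (hP i).1
    have hQ0 : ∀ i, 0 < Q i := by
      intro i
      refine one_div_pos.mp ?_
      rw [hQ i, sub_pos, div_lt_div_iff₀ hnm0 (hPpos i)]
      have := (lt_div_iff₀ hα).mp (hP i).2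
      nlinarith
    have hβ' : 0 < 1 - α/((n:ℝ)*m) := by
      rw [sub_pos, div_lt_one hnm0]; exact hαnm
    obtain ⟨β, hβdef⟩ : ∃ b : ℝ, b = 1 - α/((n:ℝ)*m) := ⟨_, rfl⟩
    have hβ : 0 < β := by rw [hβdef]; exact hβ'
    have hS' : ∀ i, S i = β * Q i := by intro i; rw [hβdef]; exact hS i
    have hqq' : 0 < 1/qq := by
      rw [hqq]
      refine Finset.sum_pos (fun i _ => one_div_pos.mpr (hQ0 i)) ?_
      have : Nonempty (Fin m) := ⟨⟨0, hm⟩⟩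
      exact Finset.univ_nonempty
    have hqq0 : 0 < qq := one_div_pos.mp hqq'
    have hsum : ∑ j, 1/(S j) = (1/qq) * β⁻¹ := by
      have h1 : ∀ j, 1/(S j) = (1/(Q j)) * β⁻¹ := by
        intro j
        rw [hS' j]
        field_simp
      rw [Finset.sum_congr rfl (fun j _ => h1 j), ← Finset.sum_mul, ← hqq]
    simp only [multiA, ApqMulti]
    refine bound_iff _ _ hβ ?_
    intro c r hr
    have hfirst : ∀ y, (∏ i, ENNReal.ofReal ((W i y ^ Q i) ^ ((∑ j, 1/(S j))⁻¹ / S i)))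
        = ENNReal.ofReal ((∏ i, W i y) ^ qq) := by
      intro y
      have h2 : ∀ i, (W i y ^ Q i) ^ ((∑ j, 1/(S j))⁻¹ / S i) = W i y ^ qq := by
        intro i
        rw [← Real.rpow_mul (hW i y).le]
        congr 1
        rw [hsum, hS' i]
        field_simp [hβ.ne', (hQ0 i).ne', hqq0.ne']
      simp_rw [h2]
      rw [← ENNReal.ofReal_prod_of_nonneg (fun i _ => Real.rpow_nonneg (hW i y).le _),
        Real.finset_prod_rpow _ _ (fun i _ => (hW i y).le)]
    have hA : (avg c r (fun y => ∏ i, ENNReal.ofReal ((W i y ^ Q i) ^ ((∑ j, 1/(S j))⁻¹ / S i)))) ^ (∑ j, 1/(S j))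
        = ((avg c r (fun y => ENNReal.ofReal ((∏ i, W i y) ^ qq))) ^ (1/qq)) ^ β⁻¹ := by
      rw [avg_congr _ _ hfirst, hsum, ENNReal.rpow_mul]
    have hB : ∀ i, (if S i = 1 then
          (essInf (fun y => ENNReal.ofReal (W i y ^ Q i)) (volume.restrict (cube c r)))⁻¹
        else (avg c r (fun y => ENNReal.ofReal ((W i y ^ Q i) ^ (1 - S i / (S i - 1))))) ^ ((S i - 1) / S i))
        = (if P i = 1 then
          (essInf (fun y => ENNReal.ofReal (W i y)) (volume.restrict (cube c r)))⁻¹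
        else (avg c r (fun y => ENNReal.ofReal (W i y ^ (-(P i/(P i - 1)))))) ^ ((P i - 1)/(P i))) ^ β⁻¹ := by
      intro i
      by_cases hPi : P i = 1
      · have h1 : 1/(Q i) = β := by rw [hQ i, hPi, hβdef]; norm_num
        have hQi : Q i = β⁻¹ := by rw [← h1, one_div, inv_inv]
        have hSi : S i = 1 := by rw [hS' i, hQi, mul_inv_cancel₀ hβ.ne']
        rw [if_pos hSi, if_pos hPi, key_essInf _ _ (hW i) (hQ0 i), ← ENNReal.inv_rpow, hQi]
      · have hPi1 : 1 < P i := lt_of_le_of_ne (hP i).1 (Ne.symm hPi)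
        have hPm : (0:ℝ) < P i - 1 := sub_pos.mpr hPi1
        have hα' : α/((n:ℝ)*m) = 1/(P i) - 1/(Q i) := by
          have := hQ i; linarith
        have hSi1 : S i - 1 = Q i * (P i - 1)/(P i) := by
          rw [hS' i, hβdef, hα']
          field_simp [(hPpos i).ne', (hQ0 i).ne']
          ring
        have hSi1pos : 0 < S i - 1 := by
          rw [hSi1]; exact div_pos (mul_pos (hQ0 i) hPm) (hPpos i)
        have hSine : S i ≠ 1 := by intro h; rw [h] at hSi1pos; norm_num at hSi1pos
        rw [if_neg hSine, if_neg hPi]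
        have h2 : 1 - S i/(S i - 1) = -(1/(S i - 1)) := by
          field_simp
          ring
        have hxp : Q i * (1 - S i/(S i - 1)) = -(P i/(P i - 1)) := by
          rw [h2, hSi1]
          field_simp [(hQ0 i).ne', hPm.ne', (hPpos i).ne']
        have hint : ∀ y, ENNReal.ofReal ((W i y ^ Q i) ^ (1 - S i / (S i - 1)))
            = ENNReal.ofReal (W i y ^ (-(P i/(P i - 1)))) := by
          intro y
          rw [← Real.rpow_mul (hW i y).le, hxp]
        have hexp : (S i - 1)/(S i) = (P i - 1)/(P i) * β⁻¹ := by
          rw [hSi1, hS' i]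
          field_simp [(hQ0 i).ne', hβ.ne', (hPpos i).ne']
        rw [avg_congr _ _ hint, hexp, ENNReal.rpow_mul]
    rw [hA, Finset.prod_congr rfl (fun i _ => hB i),
      ENNReal.prod_rpow_of_nonneg (by positivity : (0:ℝ) ≤ β⁻¹),
      ← ENNReal.mul_rpow_of_nonneg _ _ (by positivity : (0:ℝ) ≤ β⁻¹),
      ← ENNReal.rpow_mul, inv_mul_cancel₀ hβ.ne', ENNReal.rpow_one]

end Frac
end
end
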